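/- arXiv:2010.01530 — 3 statements merged into one kernel-verified Lean document; each statement's English description precedes it below -/
import Mathlib

section
/- Let (ℤ, c1) and (ℤ, c2) be two networks on the line graph ℤ (edges {i, i+1}) such that (ℤ, c2) is recurrent. Then almost surely, for every p ∈ [0,1) simultaneously, the disordered random network (ℤ, c1, c2, p) is recurrent. -/
open MeasureTheory ProbabilityTheory Filter
open scoped ENNReal Classical

noncomputable section

/-- The uniform distribution on `[0,1]`. -/
def unif01 : Measure ℝ := volume.restrict (Set.Icc 0 1)

variable {V : Type*}

/-- The conductances of the disordered random network `(G, c1, c2, p)` determined by percolation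
labels `lbl` (an edge `{x,y}` is `p`-open iff `lbl s(x,y) ≤ p`): open edges get conductance `c1`,
closed edges get `c2`. -/
def dCond (c1 c2 : V → V → ℝ) (lbl : Sym2 V → ℝ) (p : ℝ) : V → V → ℝ :=
  fun x y => if lbl s(x, y) ≤ p then c1 x y else c2 x y

/-- The biased conductance `C_λ(e) = λ^{-|e|}` on the graph `G` rooted at `o`, where
`|e| = min(dist(o,x), dist(o,y))` for an edge `e = {x,y}`; zero off edges. -/
def biasedCond (G : SimpleGraph V) (o : V) (lam : ℝ) : V → V → ℝ :=
  fun x y => if G.Adj x y then lam ^ (-(min (G.dist o x) (G.dist o y) : ℤ)) else 0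

/-- `θ` is a unit flow on the graph `G` from the vertex `a` to infinity: it is antisymmetric,
supported on edges, has zero divergence away from `a` and divergence `1` at `a`. -/
structure IsUnitFlowTo (G : SimpleGraph V) (θ : V → V → ℝ) (a : V) : Prop where
  antisymm : ∀ x y, θ x y = - θ y x
  support : ∀ x y, ¬ G.Adj x y → θ x y = 0
  div_zero : ∀ x, x ≠ a → ∑ᶠ y, θ x y = 0
  unit : ∑ᶠ y, θ a y = 1

/-- The energy `∑_e θ(e)² / c(e)` of the antisymmetric function `θ` with respect to the
conductances `c` (valued in `ℝ≥0∞`; each undirected edge is counted twice, which does not affect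
finiteness; a nonzero flow through a zero-conductance edge yields infinite energy). -/
def flowEnergy (c : V → V → ℝ) (θ : V → V → ℝ) : ℝ≥0∞ :=
  ∑' q : V × V, ENNReal.ofReal ((θ q.1 q.2) ^ 2) / ENNReal.ofReal (c q.1 q.2)

/-- The network `(G, c)` is transient at the vertex `a` if `a` admits a unit flow to infinity of
finite energy. -/
def TransientAt (G : SimpleGraph V) (c : V → V → ℝ) (a : V) : Prop :=
  ∃ θ : V → V → ℝ, IsUnitFlowTo G θ a ∧ flowEnergy c θ ≠ ⊤

/-- The network `(G, c)` is transient: some vertex admits a unit flow to infinity of finite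
energy. -/
def NetTransient (G : SimpleGraph V) (c : V → V → ℝ) : Prop :=
  ∃ a : V, TransientAt G c a

/-- The network `(G, c)` is recurrent: no vertex admits a unit flow to infinity of finite energy
(equivalently, every connected component of the subgraph spanned by positive-conductance edges is
recurrent). -/
def NetRecurrent (G : SimpleGraph V) (c : V → V → ℝ) : Prop :=
  ∀ a : V, ¬ TransientAt G c a

/-- The subgraph of `p`-open edges of `G` under percolation labels `lbl`. -/
def openSub (G : SimpleGraph V) (lbl : Sym2 V → ℝ) (p : ℝ) : SimpleGraph V where
  Adj x y := G.Adj x y ∧ lbl s(x, y) ≤ p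
  symm := ⟨by
    intro x y h
    exact ⟨h.1.symm, by rw [Sym2.eq_swap]; exact h.2⟩⟩
  loopless := ⟨fun x h => G.loopless.irrefl x h.1⟩

/-- There is an infinite open cluster in Bernoulli-`p` bond percolation on `G` with labels
`lbl`. -/
def HasInfCluster (G : SimpleGraph V) (lbl : Sym2 V → ℝ) (p : ℝ) : Prop :=
  ∃ x : V, {y : V | (openSub G lbl p).Reachable x y}.Infinite

/-- The family `U` of edge labels is an i.i.d. family of uniform-`[0,1]` random variables on the
probability space `(Ω, P)` (the grand coupling of Bernoulli bond percolation). -/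
def IsGrandCoupling {ι : Type*} {Ω : Type*} [MeasurableSpace Ω] (P : Measure Ω)
    (U : ι → Ω → ℝ) : Prop :=
  (∀ e, Measurable (U e)) ∧ iIndepFun U P ∧
    ∀ e, P.map (U e) = unif01

/-- The critical probability of Bernoulli bond percolation on `G`, realized through the grand
coupling `(P, U)`: the supremum of those `p ∈ [0,1]` for which almost surely there is no infinite
open cluster. -/
def percolationPc (G : SimpleGraph V) {Ω : Type*} [MeasurableSpace Ω] (P : Measure Ω)
    (U : Sym2 V → Ω → ℝ) : ℝ :=
  sSup {p : ℝ | p ∈ Set.Icc (0 : ℝ) 1 ∧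
    ∀ᵐ a ∂P, ¬ HasInfCluster G (fun e => U e a) p}

/-- The graph `G`, rooted at `o`, has (volume) growth rate `g`:
`|B_n(o)|^{1/n} → g` where `B_n(o)` is the ball of radius `n` around `o`. -/
def HasGrowthRate (G : SimpleGraph V) (o : V) (g : ℝ) : Prop :=
  Tendsto (fun n : ℕ => (({y : V | G.dist o y ≤ n}.ncard : ℝ)) ^ ((n : ℝ)⁻¹)) atTop (nhds g)

/-- `G` is quasi-transitive: its automorphism group has finitely many orbits on vertices. -/
def QuasiTransitive (G : SimpleGraph V) : Prop :=
  ∃ s : Finset V, ∀ x : V, ∃ y ∈ s, ∃ φ : G ≃g G, φ y = x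


/-- The line graph on `ℤ`, with edges `{i, i+1}`. -/
def zline : SimpleGraph ℤ where
  Adj x y := x = y + 1 ∨ y = x + 1
  symm := ⟨by intro x y h; tauto⟩
  loopless := ⟨by intro x h; omega⟩

section AuxProof

lemma finsum_pm (θ : ℤ → ℤ → ℝ) (x : ℤ) (h : ∀ y, ¬ zline.Adj x y → θ x y = 0) :
    ∑ᶠ y, θ x y = θ x (x - 1) + θ x (x + 1) := by
  have hsupp : Function.support (θ x) ⊆ (({x - 1, x + 1} : Finset ℤ) : Set ℤ) := by
    intro y hy
    simp only [Finset.coe_insert, Finset.coe_singleton, Set.mem_insert_iff, Set.mem_singleton_iff]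
    by_contra hcon
    push_neg at hcon
    exact hy (h y (by simp only [zline]; omega))
  rw [finsum_eq_sum_of_support_subset _ hsupp, Finset.sum_insert (by simp; omega),
    Finset.sum_singleton]

lemma flow_structure {θ : ℤ → ℤ → ℝ} {a : ℤ} (hθ : IsUnitFlowTo zline θ a) :
    ∀ n : ℤ, θ n (n + 1) = if a ≤ n then θ a (a + 1) else θ a (a + 1) - 1 := by
  -- g x := θ x (x+1); g x = g (x-1) for x ≠ a; g a = g (a-1) + 1
  have step : ∀ x : ℤ, x ≠ a → θ x (x + 1) = θ (x - 1) x := by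
    intro x hx
    have h := hθ.div_zero x hx
    rw [finsum_pm θ x (fun y => hθ.support x y)] at h
    have := hθ.antisymm x (x - 1)
    have h2 : θ (x - 1) x = θ (x - 1) ((x - 1) + 1) := by ring_nf
    linarith [h2 ▸ this]
  have stepa : θ a (a + 1) = θ (a - 1) a + 1 := by
    have h := hθ.unit
    rw [finsum_pm θ a (fun y => hθ.support a y)] at h
    have := hθ.antisymm a (a - 1)
    linarith
  -- forward induction for n ≥ a, backward for n < a
  have fwd : ∀ k : ℕ, θ (a + k) (a + k + 1) = θ a (a + 1) := by
    intro k
    induction k with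
    | zero => norm_num
    | succ k ih =>
      have hne : a + (k + 1 : ℕ) ≠ a := by push_cast; omega
      have := step (a + (k + 1 : ℕ)) hne
      push_cast at this ⊢
      have he : a + (k + 1 : ℤ) - 1 = a + k := by ring
      rw [he] at this
      have he2 : a + ((k : ℤ) + 1) = a + k + 1 := by ring
      rw [this, he2]
      exact ih
  have bwd : ∀ k : ℕ, θ (a - 1 - k) (a - 1 - k + 1) = θ a (a + 1) - 1 := by
    intro k
    induction k with
    | zero =>
      norm_num
      linarith [stepa]
    | succ k ih =>
      have hne : a - 1 - k ≠ a := by omega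
      have := step (a - 1 - k) hne
      have he1 : a - 1 - k - 1 = a - 1 - (k + 1 : ℕ) := by push_cast; ring
      have he2 : a - 1 - k = a - 1 - (k + 1 : ℕ) + 1 := by push_cast; ring
      rw [he1] at this
      rw [← ih, this]
      congr 1
      omega
  intro n
  by_cases hn : a ≤ n
  · obtain ⟨k, rfl⟩ : ∃ k : ℕ, n = a + k := ⟨(n - a).toNat, by omega⟩
    simp [hn, fwd k]
  · obtain ⟨k, rfl⟩ : ∃ k : ℕ, n = a - 1 - k := ⟨(a - 1 - n).toNat, by omega⟩
    simp [hn, bwd k]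

lemma zline_adj {x y : ℤ} : zline.Adj x y ↔ x = y + 1 ∨ y = x + 1 := Iff.rfl

lemma energy_ray_right (c θ : ℤ → ℤ → ℝ) (a : ℤ) :
    ∑' n : ℕ, ENNReal.ofReal ((θ (a + n) (a + n + 1)) ^ 2) /
      ENNReal.ofReal (c (a + n) (a + n + 1)) ≤ flowEnergy c θ := by
  have hf : Function.Injective (fun n : ℕ => ((a + n, a + n + 1) : ℤ × ℤ)) := by
    intro m n h
    simp only [Prod.mk.injEq] at h
    omega
  exact ENNReal.tsum_comp_le_tsum_of_injective hf
    (fun q : ℤ × ℤ => ENNReal.ofReal ((θ q.1 q.2) ^ 2) / ENNReal.ofReal (c q.1 q.2))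

lemma energy_ray_left (c θ : ℤ → ℤ → ℝ) (a : ℤ) :
    ∑' n : ℕ, ENNReal.ofReal ((θ (a - 1 - n) (a - n)) ^ 2) /
      ENNReal.ofReal (c (a - 1 - n) (a - n)) ≤ flowEnergy c θ := by
  have hf : Function.Injective (fun n : ℕ => ((a - 1 - n, a - n) : ℤ × ℤ)) := by
    intro m n h
    simp only [Prod.mk.injEq] at h
    omega
  exact ENNReal.tsum_comp_le_tsum_of_injective hf
    (fun q : ℤ × ℤ => ENNReal.ofReal ((θ q.1 q.2) ^ 2) / ENNReal.ofReal (c q.1 q.2))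

lemma transient_of_ray_right (c : ℤ → ℤ → ℝ) (hsymm : ∀ x y, c x y = c y x) (a : ℤ)
    (h : ∑' n : ℕ, (ENNReal.ofReal (c (a + n) (a + n + 1)))⁻¹ ≠ ⊤) :
    TransientAt zline c a := by
  set θ : ℤ → ℤ → ℝ := fun x y =>
    if a ≤ x ∧ y = x + 1 then 1 else if a ≤ y ∧ x = y + 1 then -1 else 0 with hθdef
  have hsupp : ∀ x y, ¬ zline.Adj x y → θ x y = 0 := by
    intro x y hxy
    rw [zline_adj] at hxy
    push_neg at hxy
    simp only [hθdef]
    split_ifs <;> first | rfl | omega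
  have hflow : IsUnitFlowTo zline θ a := by
    refine ⟨?_, hsupp, ?_, ?_⟩
    · intro x y
      simp only [hθdef]
      split_ifs <;> first | (exfalso; omega) | (exfalso; simp only [and_true, true_and, not_and, not_le] at *; omega) | norm_num
    · intro x hx
      rw [finsum_pm θ x (hsupp x)]
      simp only [hθdef]
      split_ifs <;> first | (exfalso; simp only [and_true, true_and, not_and, not_le] at *; omega) | norm_num
    · rw [finsum_pm θ a (hsupp a)]
      simp only [hθdef]
      split_ifs <;> first | (exfalso; simp only [and_true, true_and, not_and, not_le] at *; omega) | norm_num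
  refine ⟨θ, hflow, ?_⟩
  set g1 : ℤ × ℤ → ℝ≥0∞ := fun q =>
    if a ≤ q.1 ∧ q.2 = q.1 + 1 then (ENNReal.ofReal (c q.1 q.2))⁻¹ else 0 with hg1
  set g2 : ℤ × ℤ → ℝ≥0∞ := fun q =>
    if a ≤ q.2 ∧ q.1 = q.2 + 1 then (ENNReal.ofReal (c q.1 q.2))⁻¹ else 0 with hg2
  have hpt : ∀ q : ℤ × ℤ,
      ENNReal.ofReal ((θ q.1 q.2) ^ 2) / ENNReal.ofReal (c q.1 q.2) = g1 q + g2 q := by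
    intro q
    simp only [hθdef, hg1, hg2]
    split_ifs with h1 h2 <;> first
      | omega
      | simp [ENNReal.div_eq_inv_mul]
  have hE : flowEnergy c θ = (∑' q, g1 q) + ∑' q, g2 q := by
    rw [flowEnergy]
    rw [tsum_congr hpt, ENNReal.tsum_add]
  have hs1 : ∑' q, g1 q = ∑' n : ℕ, (ENNReal.ofReal (c (a + n) (a + n + 1)))⁻¹ := by
    have hf : Function.Injective (fun n : ℕ => ((a + n, a + n + 1) : ℤ × ℤ)) := by
      intro m n h'; simp only [Prod.mk.injEq] at h'; omega
    rw [← Function.Injective.tsum_eq hf (f := g1) ?_]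
    · refine tsum_congr fun n => ?_
      simp only [hg1]
      rw [if_pos (by refine ⟨?_, ?_⟩ <;> first | omega | (simp; omega) | simp | (dsimp only; omega))]
    · intro q hq
      simp only [hg1, Function.mem_support, ne_eq] at hq
      by_cases hc : a ≤ q.1 ∧ q.2 = q.1 + 1
      · exact ⟨(q.1 - a).toNat, by ext <;> simp <;> omega⟩
      · exact absurd (if_neg hc) hq
  have hs2 : ∑' q, g2 q = ∑' n : ℕ, (ENNReal.ofReal (c (a + n) (a + n + 1)))⁻¹ := by
    have hf : Function.Injective (fun n : ℕ => ((a + n + 1, a + n) : ℤ × ℤ)) := by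
      intro m n h'; simp only [Prod.mk.injEq] at h'; omega
    rw [← Function.Injective.tsum_eq hf (f := g2) ?_]
    · refine tsum_congr fun n => ?_
      simp only [hg2]
      rw [if_pos (by refine ⟨?_, ?_⟩ <;> first | omega | (simp; omega) | simp | (dsimp only; omega)), hsymm]
    · intro q hq
      simp only [hg2, Function.mem_support, ne_eq] at hq
      by_cases hc : a ≤ q.2 ∧ q.1 = q.2 + 1
      · exact ⟨(q.2 - a).toNat, by ext <;> simp <;> omega⟩
      · exact absurd (if_neg hc) hq
  rw [hE, hs1, hs2]
  exact ENNReal.add_ne_top.mpr ⟨h, h⟩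

lemma transient_of_ray_left (c : ℤ → ℤ → ℝ) (hsymm : ∀ x y, c x y = c y x) (a : ℤ)
    (h : ∑' n : ℕ, (ENNReal.ofReal (c (a - 1 - n) (a - n)))⁻¹ ≠ ⊤) :
    TransientAt zline c a := by
  set θ : ℤ → ℤ → ℝ := fun x y =>
    if x ≤ a ∧ y = x - 1 then 1 else if y ≤ a ∧ x = y - 1 then -1 else 0 with hθdef
  have hsupp : ∀ x y, ¬ zline.Adj x y → θ x y = 0 := by
    intro x y hxy
    rw [zline_adj] at hxy
    push_neg at hxy
    simp only [hθdef]
    split_ifs <;> first | rfl | omega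
  have hflow : IsUnitFlowTo zline θ a := by
    refine ⟨?_, hsupp, ?_, ?_⟩
    · intro x y
      simp only [hθdef]
      split_ifs <;> first | (exfalso; omega) | (exfalso; simp only [and_true, true_and, not_and, not_le] at *; omega) | norm_num
    · intro x hx
      rw [finsum_pm θ x (hsupp x)]
      simp only [hθdef]
      split_ifs <;> first | (exfalso; simp only [and_true, true_and, not_and, not_le] at *; omega) | norm_num
    · rw [finsum_pm θ a (hsupp a)]
      simp only [hθdef]
      split_ifs <;> first | (exfalso; simp only [and_true, true_and, not_and, not_le] at *; omega) | norm_num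
  refine ⟨θ, hflow, ?_⟩
  set g1 : ℤ × ℤ → ℝ≥0∞ := fun q =>
    if q.1 ≤ a ∧ q.2 = q.1 - 1 then (ENNReal.ofReal (c q.1 q.2))⁻¹ else 0 with hg1
  set g2 : ℤ × ℤ → ℝ≥0∞ := fun q =>
    if q.2 ≤ a ∧ q.1 = q.2 - 1 then (ENNReal.ofReal (c q.1 q.2))⁻¹ else 0 with hg2
  have hpt : ∀ q : ℤ × ℤ,
      ENNReal.ofReal ((θ q.1 q.2) ^ 2) / ENNReal.ofReal (c q.1 q.2) = g1 q + g2 q := by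
    intro q
    simp only [hθdef, hg1, hg2]
    split_ifs with h1 h2 <;> first
      | omega
      | simp [ENNReal.div_eq_inv_mul]
  have hE : flowEnergy c θ = (∑' q, g1 q) + ∑' q, g2 q := by
    rw [flowEnergy]
    rw [tsum_congr hpt, ENNReal.tsum_add]
  have hs1 : ∑' q, g1 q = ∑' n : ℕ, (ENNReal.ofReal (c (a - 1 - n) (a - n)))⁻¹ := by
    have hf : Function.Injective (fun n : ℕ => ((a - n, a - 1 - n) : ℤ × ℤ)) := by
      intro m n h'; simp only [Prod.mk.injEq] at h'; omega
    rw [← Function.Injective.tsum_eq hf (f := g1) ?_]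
    · refine tsum_congr fun n => ?_
      simp only [hg1]
      rw [if_pos (by refine ⟨?_, ?_⟩ <;> first | omega | (simp; omega) | simp | (dsimp only; omega)), hsymm]
    · intro q hq
      simp only [hg1, Function.mem_support, ne_eq] at hq
      by_cases hc : q.1 ≤ a ∧ q.2 = q.1 - 1
      · exact ⟨(a - q.1).toNat, by ext <;> simp <;> omega⟩
      · exact absurd (if_neg hc) hq
  have hs2 : ∑' q, g2 q = ∑' n : ℕ, (ENNReal.ofReal (c (a - 1 - n) (a - n)))⁻¹ := by
    have hf : Function.Injective (fun n : ℕ => ((a - 1 - n, a - n) : ℤ × ℤ)) := by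
      intro m n h'; simp only [Prod.mk.injEq] at h'; omega
    rw [← Function.Injective.tsum_eq hf (f := g2) ?_]
    · refine tsum_congr fun n => ?_
      simp only [hg2]
      rw [if_pos (by refine ⟨?_, ?_⟩ <;> first | omega | (simp; omega) | simp | (dsimp only; omega))]
    · intro q hq
      simp only [hg2, Function.mem_support, ne_eq] at hq
      by_cases hc : q.2 ≤ a ∧ q.1 = q.2 - 1
      · exact ⟨(a - q.2).toNat, by ext <;> simp <;> omega⟩
      · exact absurd (if_neg hc) hq
  rw [hE, hs1, hs2]
  exact ENNReal.add_ne_top.mpr ⟨h, h⟩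

variable {ι : Type*} {Ω : Type*} [MeasurableSpace Ω] {P : Measure Ω}

lemma iIndepFun_precomp {κ : Type*} {U : ι → Ω → ℝ}
    (h : iIndepFun U P) (e : κ → ι) (he : Function.Injective e) :
    iIndepFun (fun k => U (e k)) P := by
  rw [iIndepFun_iff_measure_inter_preimage_eq_mul] at h ⊢
  intro S sets hsets
  set sets' : ι → Set ℝ := fun i =>
    if hex : ∃ k ∈ S, e k = i then sets hex.choose else Set.univ with hsets'
  have hkey : ∀ k ∈ S, sets' (e k) = sets k := by
    intro k hk
    have hex : ∃ k' ∈ S, e k' = e k := ⟨k, hk, rfl⟩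
    simp only [hsets', dif_pos hex]
    have := hex.choose_spec
    rw [he this.2]
  have h1 := h (S.image e) (sets := sets') ?_
  · calc P (⋂ k ∈ S, U (e k) ⁻¹' sets k)
        = P (⋂ i ∈ S.image e, U i ⁻¹' sets' i) := by
          rw [Finset.set_biInter_finset_image]
          congr 1
          exact Set.iInter₂_congr fun k hk => by rw [hkey k hk]
      _ = ∏ i ∈ S.image e, P (U i ⁻¹' sets' i) := h1
      _ = ∏ k ∈ S, P (U (e k) ⁻¹' sets' (e k)) :=
          Finset.prod_image fun x hx y hy hxy => he hxy
      _ = ∏ k ∈ S, P (U (e k) ⁻¹' sets k) :=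
          Finset.prod_congr rfl fun k hk => by rw [hkey k hk]
  · intro i hi
    simp only [hsets']
    split_ifs with hex
    · exact hsets _ hex.choose_spec.1
    · exact MeasurableSet.univ

lemma lintegral_if_unif {U : Ω → ℝ} (hmeas : Measurable U) (hmap : P.map U = unif01)
    {q : ℝ} (hq0 : 0 ≤ q) (hq1 : q ≤ 1) (t : ℝ≥0∞) :
    ∫⁻ ω, (if q < U ω then t else 1) ∂P = t * ENNReal.ofReal (1 - q) + ENNReal.ofReal q := by
  have hg : Measurable (fun u : ℝ => if q < u then t else 1) :=
    Measurable.ite measurableSet_Ioi measurable_const measurable_const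
  have h1 : ∫⁻ ω, (if q < U ω then t else 1) ∂P
      = ∫⁻ u, (if q < u then t else 1) ∂unif01 := by
    rw [← hmap, lintegral_map hg hmeas]
  rw [h1]
  have hsplit : (fun u : ℝ => if q < u then t else 1)
      = fun u => (Set.Ioi q).indicator (fun _ => t) u + (Set.Iic q).indicator (fun _ => 1) u := by
    funext u
    by_cases hu : q < u
    · simp [Set.indicator_of_mem, hu, Set.mem_Ioi, Set.mem_Iic, not_le.mpr hu]
    · simp [Set.indicator_of_notMem, hu, Set.mem_Ioi, Set.mem_Iic, not_lt.mp hu]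
  rw [hsplit, lintegral_add_left (measurable_const.indicator measurableSet_Ioi)]
  rw [lintegral_indicator measurableSet_Ioi, lintegral_indicator measurableSet_Iic]
  simp only [lintegral_const, Measure.restrict_apply MeasurableSet.univ, Set.univ_inter]
  have hIoi : unif01 (Set.Ioi q) = ENNReal.ofReal (1 - q) := by
    rw [unif01, Measure.restrict_apply measurableSet_Ioi]
    have : Set.Ioi q ∩ Set.Icc 0 1 = Set.Ioc q 1 := by
      ext u
      simp only [Set.mem_inter_iff, Set.mem_Ioi, Set.mem_Icc, Set.mem_Ioc]
      constructor
      · rintro ⟨h1', h2', h3'⟩; exact ⟨h1', h3'⟩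
      · rintro ⟨h1', h2'⟩; exact ⟨h1', le_trans hq0 h1'.le, h2'⟩
    rw [this, Real.volume_Ioc]
  have hIic : unif01 (Set.Iic q) = ENNReal.ofReal q := by
    rw [unif01, Measure.restrict_apply measurableSet_Iic]
    have : Set.Iic q ∩ Set.Icc 0 1 = Set.Icc 0 q := by
      ext u
      simp only [Set.mem_inter_iff, Set.mem_Iic, Set.mem_Icc]
      constructor
      · rintro ⟨h1', h2', h3'⟩; exact ⟨h2', h1'⟩
      · rintro ⟨h1', h2'⟩; exact ⟨h2', h1', le_trans h2' hq1⟩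
    rw [this, Real.volume_Icc, sub_zero]
  · rw [unif01] at hIoi hIic ⊢
    rw [hIoi, hIic]
    ring

lemma real_exp_ineq {q r : ℝ} (hq0 : 0 ≤ q) (hq1 : q ≤ 1) (hr0 : 0 ≤ r) (hr1 : r ≤ 1) :
    (1 - q) * Real.exp (-r) + q ≤ Real.exp (-((1 - q) * (1 - Real.exp (-1)) * r)) := by
  have hcvx : Real.exp (-r) ≤ 1 - (1 - Real.exp (-1)) * r := by
    have h := convexOn_exp.2 (Set.mem_univ (0 : ℝ)) (Set.mem_univ (-1 : ℝ))
      (by linarith : (0:ℝ) ≤ 1 - r) hr0 (by ring)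
    simp only [smul_eq_mul, mul_zero, Real.exp_zero, mul_one, mul_neg, zero_add] at h
    have h2 : (1 - r) * 1 + r * Real.exp (-1) = 1 - (1 - Real.exp (-1)) * r := by ring
    calc Real.exp (-r) = Real.exp ((1 - r) * 0 + r * (-1)) := by ring_nf
      _ ≤ (1 - r) * Real.exp 0 + r * Real.exp (-1) :=
          convexOn_exp.2 (Set.mem_univ _) (Set.mem_univ _) (by linarith) hr0 (by ring)
      _ = 1 - (1 - Real.exp (-1)) * r := by rw [Real.exp_zero]; ring
  have hstep : (1 - q) * Real.exp (-r) + q ≤ 1 - (1 - q) * (1 - Real.exp (-1)) * r := by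
    nlinarith [hcvx, sub_nonneg.mpr hq1]
  have hfinal : 1 - (1 - q) * (1 - Real.exp (-1)) * r
      ≤ Real.exp (-((1 - q) * (1 - Real.exp (-1)) * r)) := by
    have := Real.add_one_le_exp (-((1 - q) * (1 - Real.exp (-1)) * r))
    linarith
  linarith

lemma lemmaP {U : ι → Ω → ℝ} [IsProbabilityMeasure P] (hU : IsGrandCoupling P U)
    (e : ℕ → ι) (he : Function.Injective e)
    (b : ℕ → ℝ≥0∞) (hb1 : ∀ n, b n ≤ 1) (hb : ∑' n, b n = ⊤)
    {q : ℝ} (hq0 : 0 ≤ q) (hq1 : q < 1) :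
    ∀ᵐ ω ∂P, ∑' n, (if q < U (e n) ω then b n else 0) = ⊤ := by
  obtain ⟨hmeas, hindep, hmap⟩ := hU
  set r : ℕ → ℝ := fun n => (b n).toReal with hr
  have hbne : ∀ n, b n ≠ ⊤ := fun n => ((hb1 n).trans_lt (by norm_num)).ne
  have hr0 : ∀ n, 0 ≤ r n := fun n => ENNReal.toReal_nonneg
  have hr1 : ∀ n, r n ≤ 1 := by
    intro n
    have := ENNReal.toReal_mono (by norm_num : (1:ℝ≥0∞) ≠ ⊤) (hb1 n)
    simpa using this
  have hofr : ∀ n, ENNReal.ofReal (r n) = b n := fun n => ENNReal.ofReal_toReal (hbne n)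
  set c : ℝ := (1 - q) * (1 - Real.exp (-1)) with hc
  have hcpos : 0 < c := by
    apply mul_pos (by linarith)
    have : Real.exp (-1) < 1 := by
      rw [Real.exp_lt_one_iff]; norm_num
    linarith
  set X : ℕ → Ω → ℝ≥0∞ :=
    fun n ω => if q < U (e n) ω then ENNReal.ofReal (Real.exp (-(r n))) else 1 with hX
  have hgmeas : ∀ n, Measurable (fun u : ℝ =>
      if q < u then ENNReal.ofReal (Real.exp (-(r n))) else (1 : ℝ≥0∞)) := fun n =>
    Measurable.ite measurableSet_Ioi measurable_const measurable_const
  have hXmeas : ∀ n, Measurable (X n) := fun n => (hgmeas n).comp (hmeas (e n))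
  have hX1 : ∀ n ω, X n ω ≤ 1 := by
    intro n ω
    simp only [hX]
    split_ifs
    · rw [← ENNReal.ofReal_one]
      exact ENNReal.ofReal_le_ofReal (Real.exp_le_one_iff.mpr (by linarith [hr0 n]))
    · exact le_refl 1
  have hindepX : iIndepFun X P := by
    have := (iIndepFun_precomp hindep e he).comp
      (fun n (u : ℝ) => if q < u then ENNReal.ofReal (Real.exp (-(r n))) else (1 : ℝ≥0∞)) hgmeas
    exact this
  have hEX : ∀ n, ∫⁻ ω, X n ω ∂P ≤ ENNReal.ofReal (Real.exp (-(c * r n))) := by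
    intro n
    rw [hX]
    rw [lintegral_if_unif (hmeas (e n)) (hmap (e n)) hq0 hq1.le]
    have heq : ENNReal.ofReal (Real.exp (-(r n))) * ENNReal.ofReal (1 - q) + ENNReal.ofReal q
        = ENNReal.ofReal ((1 - q) * Real.exp (-(r n)) + q) := by
      rw [← ENNReal.ofReal_mul (Real.exp_nonneg _),
        ← ENNReal.ofReal_add (mul_nonneg (Real.exp_nonneg _) (by linarith)) hq0]
      congr 1
      ring
    rw [heq]
    apply ENNReal.ofReal_le_ofReal
    have h2 := real_exp_ineq hq0 hq1.le (hr0 n) (hr1 n)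
    rw [← hc] at h2
    exact h2
  have hprod : ∀ N, ∫⁻ ω, ∏ n ∈ Finset.range N, X n ω ∂P
      = ∏ n ∈ Finset.range N, ∫⁻ ω, X n ω ∂P := by
    intro N
    induction N with
    | zero => simp
    | succ N ih =>
      have hfun : (∏ j ∈ Finset.range N, X j) = fun a => ∏ j ∈ Finset.range N, X j a :=
        funext fun a => Finset.prod_apply _ _ _
      have hFmeas : Measurable (∏ j ∈ Finset.range N, X j) := by
        rw [hfun]
        exact Finset.measurable_prod _ fun i _ => hXmeas i
      have hind : IndepFun (∏ j ∈ Finset.range N, X j) (X N) P :=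
        hindepX.indepFun_prod_range_succ hXmeas N
      calc ∫⁻ ω, ∏ n ∈ Finset.range (N + 1), X n ω ∂P
          = ∫⁻ ω, ((∏ j ∈ Finset.range N, X j) * X N) ω ∂P := by
            congr 1; funext ω
            simp [Finset.prod_range_succ, Finset.prod_apply]
        _ = (∫⁻ ω, (∏ j ∈ Finset.range N, X j) ω ∂P) * ∫⁻ ω, X N ω ∂P :=
            lintegral_mul_eq_lintegral_mul_lintegral_of_indepFun hFmeas (hXmeas N) hind
        _ = ∏ n ∈ Finset.range (N + 1), ∫⁻ ω, X n ω ∂P := by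
            rw [Finset.prod_range_succ, ← ih]
            congr 1
            apply lintegral_congr
            intro ω
            simp [Finset.prod_apply]
  have hEprod : ∀ N, ∫⁻ ω, ∏ n ∈ Finset.range N, X n ω ∂P
      ≤ ENNReal.ofReal (Real.exp (-(c * ∑ n ∈ Finset.range N, r n))) := by
    intro N
    rw [hprod N]
    calc ∏ n ∈ Finset.range N, ∫⁻ ω, X n ω ∂P
        ≤ ∏ n ∈ Finset.range N, ENNReal.ofReal (Real.exp (-(c * r n))) :=
          Finset.prod_le_prod' fun n _ => hEX n
      _ = ENNReal.ofReal (∏ n ∈ Finset.range N, Real.exp (-(c * r n))) := by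
          rw [← ENNReal.ofReal_prod_of_nonneg]
          intro n _
          exact Real.exp_nonneg _
      _ = ENNReal.ofReal (Real.exp (-(c * ∑ n ∈ Finset.range N, r n))) := by
          rw [← Real.exp_sum]
          congr 1
          rw [Finset.mul_sum, ← Finset.sum_neg_distrib]
  have hrsum : Tendsto (fun N => ∑ n ∈ Finset.range N, r n) atTop atTop := by
    rw [tendsto_atTop]
    intro M
    have hS : Tendsto (fun N => ∑ n ∈ Finset.range N, b n) atTop (nhds ⊤) := by
      rw [← hb]
      exact ENNReal.tendsto_nat_tsum b
    have hev : ∀ᶠ N in atTop, ENNReal.ofReal M < ∑ n ∈ Finset.range N, b n :=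
      hS.eventually (eventually_gt_nhds (by simp [ENNReal.ofReal_lt_top]))
    filter_upwards [hev] with N hN
    have hfin : ∑ n ∈ Finset.range N, b n ≠ ⊤ := by
      refine ne_of_lt (lt_of_le_of_lt (Finset.sum_le_sum fun n _ => hb1 n) ?_)
      simp
    have := (ENNReal.ofReal_le_iff_le_toReal hfin).mp hN.le
    rwa [ENNReal.toReal_sum fun n _ => hbne n] at this
  set L : Ω → ℝ≥0∞ := fun ω => ⨅ N, ∏ n ∈ Finset.range N, X n ω with hLdef
  have hLmeas : Measurable L :=
    Measurable.iInf fun N => Finset.measurable_prod _ (fun i _ => hXmeas i) |>.comp measurable_id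
      |>.mono le_rfl le_rfl
  have hLint : ∫⁻ ω, L ω ∂P = 0 := by
    have hle : ∀ N, ∫⁻ ω, L ω ∂P ≤ ENNReal.ofReal (Real.exp (-(c * ∑ n ∈ Finset.range N, r n))) :=
      fun N => le_trans (lintegral_mono fun ω => iInf_le _ N) (hEprod N)
    have htend : Tendsto (fun N => ENNReal.ofReal (Real.exp (-(c * ∑ n ∈ Finset.range N, r n))))
        atTop (nhds 0) := by
      have h1 : Tendsto (fun N => -(c * ∑ n ∈ Finset.range N, r n)) atTop atBot :=
        tendsto_neg_atTop_atBot.comp (hrsum.const_mul_atTop hcpos)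
      rw [← ENNReal.ofReal_zero]
      exact ENNReal.tendsto_ofReal (Real.tendsto_exp_atBot.comp h1)
    exact le_antisymm (ge_of_tendsto' htend hle) zero_le
  have hL0 : ∀ᵐ ω ∂P, L ω = 0 := (lintegral_eq_zero_iff hLmeas).mp hLint
  filter_upwards [hL0] with ω hω
  by_contra hfin
  set T : ℝ≥0∞ := ∑' n, (if q < U (e n) ω then b n else 0) with hT
  have hprodω : ∀ N, ∏ n ∈ Finset.range N, X n ω
      = ENNReal.ofReal (Real.exp (-(∑ n ∈ Finset.range N,
          if q < U (e n) ω then r n else 0))) := by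
    intro N
    have hXform : ∀ n, X n ω
        = ENNReal.ofReal (Real.exp (-(if q < U (e n) ω then r n else 0))) := by
      intro n
      simp only [hX]
      split_ifs
      · rfl
      · simp
    calc ∏ n ∈ Finset.range N, X n ω
        = ∏ n ∈ Finset.range N,
            ENNReal.ofReal (Real.exp (-(if q < U (e n) ω then r n else 0))) :=
          Finset.prod_congr rfl fun n _ => hXform n
      _ = ENNReal.ofReal (∏ n ∈ Finset.range N,
            Real.exp (-(if q < U (e n) ω then r n else 0))) :=
          (ENNReal.ofReal_prod_of_nonneg fun n _ => Real.exp_nonneg _).symm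
      _ = ENNReal.ofReal (Real.exp (∑ n ∈ Finset.range N,
            -(if q < U (e n) ω then r n else 0))) := by rw [Real.exp_sum]
      _ = _ := by rw [Finset.sum_neg_distrib]
  set T : ℝ≥0∞ := ∑' n, (if q < U (e n) ω then b n else 0) with hT
  have hTfin : T ≠ ⊤ := hfin
  have hbound : ∀ N, (∑ n ∈ Finset.range N, if q < U (e n) ω then r n else 0) ≤ T.toReal := by
    intro N
    have h1 : ENNReal.ofReal (∑ n ∈ Finset.range N, if q < U (e n) ω then r n else 0)
        = ∑ n ∈ Finset.range N, (if q < U (e n) ω then b n else 0) := by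
      rw [ENNReal.ofReal_sum_of_nonneg]
      · refine Finset.sum_congr rfl fun n _ => ?_
        split_ifs
        · exact hofr n
        · exact ENNReal.ofReal_zero
      · intro n _
        split_ifs
        · exact hr0 n
        · exact le_refl 0
    have h2 : ∑ n ∈ Finset.range N, (if q < U (e n) ω then b n else 0) ≤ T :=
      ENNReal.sum_le_tsum _
    rw [← h1] at h2
    exact (ENNReal.ofReal_le_iff_le_toReal hTfin).mp h2
  have hpos : ENNReal.ofReal (Real.exp (-(T.toReal))) ≤ L ω := by
    refine le_iInf fun N => ?_
    rw [hprodω N]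
    exact ENNReal.ofReal_le_ofReal (Real.exp_le_exp.mpr (neg_le_neg (hbound N)))
  rw [hω] at hpos
  simp only [nonpos_iff_eq_zero, ENNReal.ofReal_eq_zero] at hpos
  linarith [Real.exp_pos (-(T.toReal))]

lemma tsum_min_one_eq_top (f : ℕ → ℝ≥0∞) (h : ∀ m : ℕ, ∑' n, f (m + n) = ⊤) :
    ∑' n, min (f n) 1 = ⊤ := by
  by_cases hfin : {n : ℕ | 1 ≤ f n}.Finite
  · obtain ⟨m, hm⟩ : ∃ m : ℕ, ∀ k ∈ {n : ℕ | 1 ≤ f n}, k < m := by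
      rcases hfin.bddAbove with ⟨m, hm⟩
      exact ⟨m + 1, fun k hk => Nat.lt_succ_of_le (hm hk)⟩
    have key : ∑' n, min (f (m + n)) 1 = ⊤ := by
      refine Eq.trans (tsum_congr fun n => ?_) (h m)
      refine min_eq_left ?_
      by_contra hc
      push_neg at hc
      exact absurd (hm (m + n) (le_of_lt hc)) (by omega)
    have hle := ENNReal.tsum_comp_le_tsum_of_injective
      (add_right_injective m)
      (fun n => min (f n) 1)
    exact top_le_iff.mp (key ▸ hle)
  · have : Infinite {n : ℕ | 1 ≤ f n} := Set.infinite_coe_iff.mpr hfin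
    have key : ∑' (k : {n : ℕ | 1 ≤ f n}), min (f (k : ℕ)) 1 = ⊤ := by
      refine Eq.trans (tsum_congr fun k => min_eq_right k.2) ?_
      exact ENNReal.tsum_const_eq_top_of_ne_zero one_ne_zero
    have hle := ENNReal.tsum_comp_le_tsum_of_injective
      (Subtype.val_injective : Function.Injective ((↑) : {n : ℕ | 1 ≤ f n} → ℕ))
      (fun n => min (f n) 1)
    exact top_le_iff.mp (key ▸ hle)

end AuxProof

/-- Let `(ℤ, c1)` and `(ℤ, c2)` be two networks on the line graph `ℤ` such that
`(ℤ, c2)` is recurrent. Then almost surely, for every `p ∈ [0,1)` simultaneously, the disordered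
random network `(ℤ, c1, c2, p)` is recurrent. -/
theorem statement_2
    (c1 c2 : ℤ → ℤ → ℝ)
    (hc1symm : ∀ x y, c1 x y = c1 y x) (hc1nonneg : ∀ x y, 0 ≤ c1 x y)
    (hc1supp : ∀ x y, ¬ zline.Adj x y → c1 x y = 0)
    (hc2symm : ∀ x y, c2 x y = c2 y x) (hc2nonneg : ∀ x y, 0 ≤ c2 x y)
    (hc2supp : ∀ x y, ¬ zline.Adj x y → c2 x y = 0)
    (hrec : NetRecurrent zline c2)
    {Ω : Type*} [MeasurableSpace Ω] (P : Measure Ω) [IsProbabilityMeasure P]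
    (U : Sym2 ℤ → Ω → ℝ) (hU : IsGrandCoupling P U) :
    ∀ᵐ a ∂P, ∀ p : ℝ, 0 ≤ p → p < 1 →
      NetRecurrent zline (dCond c1 c2 (fun e => U e a) p) := by
  classical
  have htailR : ∀ a : ℤ, ∑' n : ℕ, (ENNReal.ofReal (c2 (a + n) (a + n + 1)))⁻¹ = ⊤ := by
    intro a
    by_contra hne
    exact hrec a (transient_of_ray_right c2 hc2symm a hne)
  have htailL : ∀ a : ℤ, ∑' n : ℕ, (ENNReal.ofReal (c2 (a - 1 - n) (a - n)))⁻¹ = ⊤ := by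
    intro a
    by_contra hne
    exact hrec a (transient_of_ray_left c2 hc2symm a hne)
  have hbRsum : ∀ a : ℤ, ∑' n : ℕ, min ((ENNReal.ofReal (c2 (a + n) (a + n + 1)))⁻¹) 1 = ⊤ := by
    intro a
    apply tsum_min_one_eq_top
    intro m
    refine Eq.trans (tsum_congr fun n => ?_) (htailR (a + m))
    have h1 : a + ((m + n : ℕ) : ℤ) = a + m + n := by push_cast; ring
    rw [h1]
  have hbLsum : ∀ a : ℤ, ∑' n : ℕ, min ((ENNReal.ofReal (c2 (a - 1 - n) (a - n)))⁻¹) 1 = ⊤ := by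
    intro a
    apply tsum_min_one_eq_top
    intro m
    refine Eq.trans (tsum_congr fun n => ?_) (htailL (a - m))
    have h1 : a - 1 - ((m + n : ℕ) : ℤ) = a - m - 1 - n := by push_cast; ring
    have h2 : a - ((m + n : ℕ) : ℤ) = a - m - n := by push_cast; ring
    rw [h1, h2]
  have main : ∀ aq : ℤ × ℚ, ∀ᵐ ω ∂P,
      (0 ≤ ((aq.2 : ℝ)) → ((aq.2 : ℝ)) < 1 →
        (∑' n : ℕ, (if (aq.2 : ℝ) < U s(aq.1 + (n : ℤ), aq.1 + n + 1) ω then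
            min ((ENNReal.ofReal (c2 (aq.1 + n) (aq.1 + n + 1)))⁻¹) 1 else 0) = ⊤) ∧
        (∑' n : ℕ, (if (aq.2 : ℝ) < U s(aq.1 - 1 - (n : ℤ), aq.1 - n) ω then
            min ((ENNReal.ofReal (c2 (aq.1 - 1 - n) (aq.1 - n)))⁻¹) 1 else 0) = ⊤)) := by
    rintro ⟨a, q⟩
    by_cases hq : 0 ≤ (q : ℝ) ∧ (q : ℝ) < 1
    · have heR : Function.Injective (fun n : ℕ => s(a + (n : ℤ), a + n + 1)) := by
        intro m n h
        simp only [Sym2.eq_iff] at h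
        omega
      have heL : Function.Injective (fun n : ℕ => s(a - 1 - (n : ℤ), a - n)) := by
        intro m n h
        simp only [Sym2.eq_iff] at h
        omega
      filter_upwards [lemmaP hU _ heR _ (fun n => min_le_right _ _) (hbRsum a) hq.1 hq.2,
        lemmaP hU _ heL _ (fun n => min_le_right _ _) (hbLsum a) hq.1 hq.2] with ω h1 h2
      exact fun _ _ => ⟨h1, h2⟩
    · filter_upwards with ω h1 h2
      exact absurd ⟨h1, h2⟩ hq
  have main' := (ae_all_iff.mpr main)
  filter_upwards [main'] with ω hgood
  intro p hp0 hp1 a htrans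
  obtain ⟨θ, hθflow, hθE⟩ := htrans
  obtain ⟨q, hq1, hq2⟩ := exists_rat_btwn hp1
  have hq0 : (0 : ℝ) ≤ (q : ℝ) := le_trans hp0 hq1.le
  have hstruct := flow_structure hθflow
  by_cases hα : θ a (a + 1) = 0
  · -- left ray contradiction
    have hgL := (hgood (a, q) hq0 hq2).2
    have hEleft := energy_ray_left (dCond c1 c2 (fun e => U e ω) p) θ a
    have hval : ∀ n : ℕ, θ (a - 1 - n) (a - n) = -1 := by
      intro n
      have h1 := hstruct (a - 1 - n)
      rw [if_neg (by omega)] at h1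
      have h2 : a - 1 - (n : ℤ) + 1 = a - n := by ring
      rw [h2] at h1
      rw [h1, hα]
      ring
    have hsum_eq : (∑' n : ℕ, ENNReal.ofReal ((θ (a - 1 - n) (a - n)) ^ 2) /
          ENNReal.ofReal (dCond c1 c2 (fun e => U e ω) p (a - 1 - n) (a - n)))
        = ∑' n : ℕ, (ENNReal.ofReal (dCond c1 c2 (fun e => U e ω) p (a - 1 - n) (a - n)))⁻¹ := by
      refine tsum_congr fun n => ?_
      rw [hval n]
      norm_num [one_div]
    have hle : (⊤ : ℝ≥0∞)
        ≤ ∑' n : ℕ, (ENNReal.ofReal (dCond c1 c2 (fun e => U e ω) p (a - 1 - n) (a - n)))⁻¹ := by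
      rw [← hgL]
      apply ENNReal.tsum_le_tsum
      intro n
      by_cases hcase : (q : ℝ) < U s(a - 1 - (n : ℤ), a - n) ω
      · rw [if_pos hcase]
        have hnotle : ¬ ((fun e => U e ω) s(a - 1 - (n : ℤ), a - n) ≤ p) := by
          simp only [not_le]
          linarith
        rw [dCond, if_neg hnotle]
        exact min_le_left _ _
      · rw [if_neg hcase]
        exact zero_le
    exact hθE (top_le_iff.mp (le_trans (hsum_eq ▸ hle) hEleft))
  · -- right ray contradiction
    have hgR := (hgood (a, q) hq0 hq2).1
    have hEright := energy_ray_right (dCond c1 c2 (fun e => U e ω) p) θ a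
    have hval : ∀ n : ℕ, θ (a + n) (a + n + 1) = θ a (a + 1) := by
      intro n
      have h1 := hstruct (a + n)
      rwa [if_pos (by omega)] at h1
    have hα2 : ENNReal.ofReal ((θ a (a + 1)) ^ 2) ≠ 0 := by
      rw [ne_eq, ENNReal.ofReal_eq_zero, not_le]
      exact lt_of_le_of_ne (sq_nonneg _) (Ne.symm (pow_ne_zero 2 hα))
    have hsum_eq : (∑' n : ℕ, ENNReal.ofReal ((θ (a + n) (a + n + 1)) ^ 2) /
          ENNReal.ofReal (dCond c1 c2 (fun e => U e ω) p (a + n) (a + n + 1)))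
        = ENNReal.ofReal ((θ a (a + 1)) ^ 2) *
          ∑' n : ℕ, (ENNReal.ofReal (dCond c1 c2 (fun e => U e ω) p (a + n) (a + n + 1)))⁻¹ := by
      rw [← ENNReal.tsum_mul_left]
      refine tsum_congr fun n => ?_
      rw [hval n, div_eq_mul_inv]
    have hle : (⊤ : ℝ≥0∞)
        ≤ ∑' n : ℕ, (ENNReal.ofReal (dCond c1 c2 (fun e => U e ω) p (a + n) (a + n + 1)))⁻¹ := by
      rw [← hgR]
      apply ENNReal.tsum_le_tsum
      intro n
      by_cases hcase : (q : ℝ) < U s(a + (n : ℤ), a + n + 1) ω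
      · rw [if_pos hcase]
        have hnotle : ¬ ((fun e => U e ω) s(a + (n : ℤ), a + n + 1) ≤ p) := by
          simp only [not_le]
          linarith
        rw [dCond, if_neg hnotle]
        exact min_le_left _ _
      · rw [if_neg hcase]
        exact zero_le
    have htop : (∑' n : ℕ, ENNReal.ofReal ((θ (a + n) (a + n + 1)) ^ 2) /
        ENNReal.ofReal (dCond c1 c2 (fun e => U e ω) p (a + n) (a + n + 1))) = ⊤ := by
      rw [hsum_eq, top_le_iff.mp hle, ENNReal.mul_top hα2]
    exact hθE (top_le_iff.mp (htop ▸ hEright))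


end
end

section
/- Let G be a Cayley graph of the group ℤ with respect to a finite symmetric generating set, and let (G, c1) and (G, c2) be two networks on G with c := sup_{e∈E} c2(e) < ∞. Then almost surely, for every p ∈ [0,1) simultaneously, the disordered random network (G, c1, c2, p) is recurrent. -/
open MeasureTheory ProbabilityTheory Filter
open scoped ENNReal Classical

noncomputable section

variable {V : Type*}

/-! ### Auxiliary machinery for Statement 3 -/

/-- The directed pairs crossing the cut at `n`, within the band of width `R`. -/
def cutPairs (R : ℕ) (n : ℤ) : Finset (ℤ × ℤ) :=
  Finset.Ioc (n - (R : ℤ)) n ×ˢ Finset.Ioc n (n + (R : ℤ))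

lemma mem_cutPairs {R : ℕ} {n : ℤ} {q : ℤ × ℤ} :
    q ∈ cutPairs R n ↔ (n - (R : ℤ) < q.1 ∧ q.1 ≤ n) ∧ (n < q.2 ∧ q.2 ≤ n + (R : ℤ)) := by
  simp [cutPairs, Finset.mem_product, Finset.mem_Ioc]

/-- Net flow across the cut at `n`. -/
def cutFlow (R : ℕ) (θ : ℤ → ℤ → ℝ) (n : ℤ) : ℝ := ∑ q ∈ cutPairs R n, θ q.1 q.2

lemma cutFlow_eq_filter (R : ℕ) (θ : ℤ → ℤ → ℝ)
    (hband : ∀ x y : ℤ, R < (x - y).natAbs → θ x y = 0) (n : ℤ)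
    (T : Finset (ℤ × ℤ)) (hT : cutPairs R n ⊆ T) :
    ∑ q ∈ T.filter (fun q => q.1 ≤ n ∧ n < q.2), θ q.1 q.2 = cutFlow R θ n := by
  refine (Finset.sum_subset ?_ ?_).symm
  · intro q hq
    have hq' := mem_cutPairs.1 hq
    exact Finset.mem_filter.2 ⟨hT hq, hq'.1.2, hq'.2.1⟩
  · intro q hq hq'
    rw [Finset.mem_filter] at hq
    rw [mem_cutPairs] at hq'
    exact hband _ _ (by omega)

lemma cutFlow_step (R : ℕ) (θ : ℤ → ℤ → ℝ)
    (hband : ∀ x y : ℤ, R < (x - y).natAbs → θ x y = 0)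
    (hanti : ∀ x y, θ x y = - θ y x) (n : ℤ) :
    cutFlow R θ n - cutFlow R θ (n - 1) = ∑ᶠ y, θ n y := by
  classical
  have hdiag : ∀ x : ℤ, θ x x = 0 := fun x => by have := hanti x x; linarith
  set W : Finset ℤ := Finset.Icc (n - 1 - (R : ℤ)) (n + (R : ℤ)) with hW
  have hnW : n ∈ W := by simp only [hW, Finset.mem_Icc]; omega
  have h1 : cutFlow R θ n
      = ∑ q ∈ (W ×ˢ W).filter (fun q => q.1 ≤ n ∧ n < q.2), θ q.1 q.2 := by
    refine (cutFlow_eq_filter R θ hband n _ ?_).symm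
    intro q hq
    rw [mem_cutPairs] at hq
    rw [Finset.mem_product, Finset.mem_Icc, Finset.mem_Icc]
    omega
  have h2 : cutFlow R θ (n - 1)
      = ∑ q ∈ (W ×ˢ W).filter (fun q => q.1 ≤ n - 1 ∧ n - 1 < q.2), θ q.1 q.2 := by
    refine (cutFlow_eq_filter R θ hband (n - 1) _ ?_).symm
    intro q hq
    rw [mem_cutPairs] at hq
    rw [Finset.mem_product, Finset.mem_Icc, Finset.mem_Icc]
    omega
  have hfin : ∑ᶠ y, θ n y = ∑ y ∈ W, θ n y := by
    refine finsum_eq_finset_sum_of_support_subset _ ?_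
    intro y hy
    simp only [Function.mem_support] at hy
    simp only [hW, Finset.coe_Icc, Set.mem_Icc]
    by_contra hc
    exact hy (hband n y (by omega))
  rw [h1, h2, hfin, Finset.sum_filter, Finset.sum_filter, ← Finset.sum_sub_distrib,
    Finset.sum_product]
  have hpt : ∀ x y : ℤ,
      ((if x ≤ n ∧ n < y then θ x y else 0) - (if x ≤ n - 1 ∧ n - 1 < y then θ x y else 0))
      = (if x = n then (if n < y then θ n y else 0) else 0)
        + (if y = n then (if x ≤ n - 1 then θ n x else 0) else 0) := by
    intro x y
    split_ifs <;>
      first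
      | ring1
      | (exfalso; omega)
      | (rw [show x = n by omega] <;> ring1)
      | (rw [show y = n by omega, hanti x n] <;> ring1)
  calc ∑ x ∈ W, ∑ y ∈ W,
        ((if x ≤ n ∧ n < y then θ x y else 0) - (if x ≤ n - 1 ∧ n - 1 < y then θ x y else 0))
      = ∑ x ∈ W, ∑ y ∈ W,
        ((if x = n then (if n < y then θ n y else 0) else 0)
          + (if y = n then (if x ≤ n - 1 then θ n x else 0) else 0)) :=
        Finset.sum_congr rfl fun x _ => Finset.sum_congr rfl fun y _ => hpt x y
    _ = (∑ x ∈ W, ∑ y ∈ W, (if x = n then (if n < y then θ n y else 0) else 0))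
        + ∑ x ∈ W, ∑ y ∈ W, (if y = n then (if x ≤ n - 1 then θ n x else 0) else 0) := by
        simp only [Finset.sum_add_distrib]
    _ = (∑ y ∈ W, (if n < y then θ n y else 0))
        + ∑ x ∈ W, (if x ≤ n - 1 then θ n x else 0) := by
        congr 1
        · rw [Finset.sum_eq_single_of_mem n hnW]
          · simp
          · intro x _ hx
            simp [hx]
        · refine Finset.sum_congr rfl fun x _ => ?_
          rw [Finset.sum_eq_single_of_mem n hnW]
          · simp
          · intro y _ hy
            simp [hy]
    _ = ∑ y ∈ W, θ n y := by
        rw [← Finset.sum_add_distrib]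
        refine Finset.sum_congr rfl fun y _ => ?_
        rcases lt_trichotomy n y with h | h | h
        · rw [if_pos h, if_neg (by omega)]; ring
        · rw [if_neg (by omega), if_neg (by omega), ← h, hdiag]; ring
        · rw [if_neg (by omega), if_pos (by omega)]; ring

/-- The deterministic heart of Statement 3: on a band graph over `ℤ`, if there are completely
blocked cuts (with conductances at most `c'` on blocked crossing edges) arbitrarily far to the
right and to the left, then the network is recurrent. -/
lemma det_recurrent (G : SimpleGraph ℤ) (R : ℕ) (hR1 : 1 ≤ R)
    (hband : ∀ x y : ℤ, G.Adj x y → (x - y).natAbs ≤ R)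
    (d : ℤ → ℤ → ℝ) (c' : ℝ) (hc' : 0 < c')
    (Blk : ℤ → Prop)
    (hBd : ∀ n, Blk n → ∀ x y : ℤ, G.Adj x y → x ≤ n → n < y → d x y ≤ c')
    (hup : ∀ m : ℤ, ∃ n, m ≤ n ∧ Blk n) (hdown : ∀ m : ℤ, ∃ n, n ≤ m ∧ Blk n) :
    NetRecurrent G d := by
  classical
  rintro a ⟨θ, hθ, hE⟩
  have hbandθ : ∀ x y : ℤ, R < (x - y).natAbs → θ x y = 0 := fun x y h =>
    hθ.support x y fun hadj => by have := hband x y hadj; omega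
  have hstep := cutFlow_step R θ hbandθ hθ.antisymm
  have hupF : ∀ n, a ≤ n → cutFlow R θ n = cutFlow R θ a := by
    refine Int.le_induction (motive := fun n _ => cutFlow R θ n = cutFlow R θ a) rfl ?_
    intro m hm ih
    have h := hstep (m + 1)
    rw [hθ.div_zero (m + 1) (by omega), show m + 1 - 1 = m by ring] at h
    linarith
  have hdownF : ∀ n, n ≤ a - 1 → cutFlow R θ n = cutFlow R θ (a - 1) := by
    refine Int.le_induction_down (motive := fun n _ => cutFlow R θ n = cutFlow R θ (a - 1)) rfl ?_
    intro m hm ih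
    have h := hstep m
    rw [hθ.div_zero m (by omega)] at h
    linarith
  have hunit : cutFlow R θ a - cutFlow R θ (a - 1) = 1 := by
    have h := hstep a
    rw [hθ.unit] at h
    exact h
  obtain ⟨v, hv0, hgood⟩ :
      ∃ v : ℝ, v ≠ 0 ∧ ∀ b : ℕ, ∃ n, Blk n ∧ cutFlow R θ n = v ∧ b ≤ n.natAbs := by
    by_cases hFa : cutFlow R θ a = 0
    · refine ⟨cutFlow R θ (a - 1), by rw [show cutFlow R θ (a - 1) = -1 by linarith]; norm_num, ?_⟩
      intro b
      obtain ⟨n, hn1, hn2⟩ := hdown (min (a - 1) (-(b : ℤ)))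
      rw [le_min_iff] at hn1
      exact ⟨n, hn2, hdownF n (by omega), by omega⟩
    · refine ⟨cutFlow R θ a, hFa, ?_⟩
      intro b
      obtain ⟨n, hn1, hn2⟩ := hup (max a (b : ℤ))
      rw [max_le_iff] at hn1
      exact ⟨n, hn2, hupF n (by omega), by omega⟩
  choose g hg using hgood
  let f : ℕ → ℤ := fun k => Nat.rec (g 0) (fun _ p => g (p.natAbs + R)) k
  have hfs : ∀ k, f (k + 1) = g ((f k).natAbs + R) := fun k => rfl
  have hfB : ∀ k, Blk (f k) ∧ cutFlow R θ (f k) = v := by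
    intro k
    cases k with
    | zero => exact ⟨(hg 0).1, (hg 0).2.1⟩
    | succ m => exact ⟨(hg _).1, (hg _).2.1⟩
  have habs : ∀ k, (f k).natAbs + R ≤ (f (k + 1)).natAbs := fun k => (hg ((f k).natAbs + R)).2.2
  have hmono : ∀ i j : ℕ, i < j → (f i).natAbs + R ≤ (f j).natAbs := by
    intro i j hij
    induction j with
    | zero => omega
    | succ m ih =>
      rcases Nat.lt_succ_iff_lt_or_eq.1 hij with h | h
      · have h1 := ih h
        have h2 := habs m
        omega
      · subst h
        exact habs i
  have hsep : ∀ i j : ℕ, i ≠ j → R ≤ (f i - f j).natAbs := by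
    intro i j hne
    rcases hne.lt_or_gt with h | h
    · have := hmono i j h; omega
    · have := hmono j i h; omega
  have hRR : (0 : ℝ) < (R : ℝ) * R := by
    have : (0 : ℝ) < (R : ℝ) := by exact_mod_cast hR1
    positivity
  set δ : ℝ := |v| / ((R : ℝ) * R) with hδ
  have hδ0 : 0 < δ := div_pos (abs_pos.2 hv0) hRR
  have hpick : ∀ k : ℕ, ∃ q ∈ cutPairs R (f k), δ ≤ |θ q.1 q.2| := by
    intro k
    have hcard : (cutPairs R (f k)).card = R * R := by
      rw [cutPairs, Finset.card_product, Int.card_Ioc, Int.card_Ioc,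
        show (f k - (f k - (R : ℤ))).toNat = R by omega,
        show (f k + (R : ℤ) - f k).toNat = R by omega]
    have hne : (cutPairs R (f k)).Nonempty :=
      ⟨(f k, f k + 1), mem_cutPairs.2 (by constructor <;> constructor <;> omega)⟩
    have hsum : ∑ q ∈ cutPairs R (f k), θ q.1 q.2 = v := (hfB k).2
    have hconst : ∑ _q ∈ cutPairs R (f k), δ = |v| := by
      rw [Finset.sum_const, hcard, nsmul_eq_mul, hδ]
      push_cast
      field_simp
    have h1 : ∑ _q ∈ cutPairs R (f k), δ ≤ ∑ q ∈ cutPairs R (f k), |θ q.1 q.2| := by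
      rw [hconst, ← hsum]
      exact Finset.abs_sum_le_sum_abs _ _
    exact Finset.exists_le_of_sum_le hne h1
  choose qf hqmem hqge using hpick
  set ε : ℝ≥0∞ := ENNReal.ofReal (δ ^ 2) / ENNReal.ofReal c' with hε
  have hεpos : 0 < ε :=
    ENNReal.div_pos (ENNReal.ofReal_pos.2 (by positivity)).ne' ENNReal.ofReal_ne_top
  have hεtop : ε ≠ ⊤ :=
    (ENNReal.div_lt_top ENNReal.ofReal_ne_top (ENNReal.ofReal_pos.2 hc').ne').ne
  have hterm_ge : ∀ k, ε ≤ ENNReal.ofReal ((θ (qf k).1 (qf k).2) ^ 2)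
      / ENNReal.ofReal (d (qf k).1 (qf k).2) := by
    intro k
    have hmem := mem_cutPairs.1 (hqmem k)
    have hθne : θ (qf k).1 (qf k).2 ≠ 0 := by
      intro h0
      have := hqge k
      rw [h0, abs_zero] at this
      linarith
    have hadj : G.Adj (qf k).1 (qf k).2 := by
      by_contra hna
      exact hθne (hθ.support _ _ hna)
    have hd : d (qf k).1 (qf k).2 ≤ c' := hBd (f k) (hfB k).1 _ _ hadj hmem.1.2 hmem.2.1
    rw [hε]
    refine ENNReal.div_le_div (ENNReal.ofReal_le_ofReal ?_) (ENNReal.ofReal_le_ofReal hd)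
    calc δ ^ 2 ≤ |θ (qf k).1 (qf k).2| ^ 2 := pow_le_pow_left₀ hδ0.le (hqge k) 2
      _ = (θ (qf k).1 (qf k).2) ^ 2 := sq_abs _
  have hinj : ∀ i j, qf i = qf j → i = j := by
    intro i j hij
    by_contra hne
    have h1 := mem_cutPairs.1 (hqmem i)
    have h2 := mem_cutPairs.1 (hqmem j)
    rw [hij] at h1
    have := hsep i j hne
    omega
  obtain ⟨N, hN⟩ := ENNReal.exists_nat_gt (ENNReal.div_lt_top hE hεpos.ne').ne
  have hlt : flowEnergy d θ < N * ε :=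
    (ENNReal.div_lt_iff (Or.inl hεpos.ne') (Or.inl hεtop)).1 hN
  have hge : (N : ℝ≥0∞) * ε ≤ flowEnergy d θ := by
    calc (N : ℝ≥0∞) * ε = ∑ _k ∈ Finset.range N, ε := by
          rw [Finset.sum_const, Finset.card_range, nsmul_eq_mul]
      _ ≤ ∑ k ∈ Finset.range N, (ENNReal.ofReal ((θ (qf k).1 (qf k).2) ^ 2)
            / ENNReal.ofReal (d (qf k).1 (qf k).2)) :=
          Finset.sum_le_sum fun k _ => hterm_ge k
      _ = ∑ q ∈ (Finset.range N).image qf, (ENNReal.ofReal ((θ q.1 q.2) ^ 2)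
            / ENNReal.ofReal (d q.1 q.2)) :=
          (Finset.sum_image (f := fun q : ℤ × ℤ => ENNReal.ofReal ((θ q.1 q.2) ^ 2)
            / ENNReal.ofReal (d q.1 q.2)) (fun i _ j _ h => hinj i j h)).symm
      _ ≤ ∑' q : ℤ × ℤ, (ENNReal.ofReal ((θ q.1 q.2) ^ 2) / ENNReal.ofReal (d q.1 q.2)) :=
          ENNReal.sum_le_tsum _
      _ = flowEnergy d θ := rfl
  exact absurd hge (not_le.2 hlt)

/-- Probabilistic input: along any `R`-separated sequence of cut positions, almost surely
infinitely many cuts are completely `q`-blocked. -/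
lemma blocked_cuts_as {Ω : Type*} [MeasurableSpace Ω] (P : Measure Ω) [IsProbabilityMeasure P]
    (U : Sym2 ℤ → Ω → ℝ) (hU : IsGrandCoupling P U) (R : ℕ)
    (q : ℝ) (hq0 : 0 ≤ q) (hq1 : q < 1)
    (ν : ℕ → ℤ) (hsep : ∀ i j : ℕ, i ≠ j → R ≤ (ν i - ν j).natAbs) :
    ∀ᵐ ω ∂P, ∃ᶠ k in atTop, ∀ x y : ℤ,
      x ≤ ν k → ν k < y → (x - y).natAbs ≤ R → q < U s(x, y) ω := by
  classical
  set E : ℕ → Finset (Sym2 ℤ) := fun k => (cutPairs R (ν k)).image (fun p => s(p.1, p.2))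
    with hEdef
  set B : ℕ → Set Ω := fun k => ⋂ e ∈ E k, U e ⁻¹' Set.Ioi q with hBdef
  have hBm : ∀ k, MeasurableSet (B k) := fun k =>
    MeasurableSet.biInter (Finset.countable_toSet _) fun e _ => (hU.1 e) measurableSet_Ioi
  have hPA : ∀ e, P (U e ⁻¹' Set.Ioi q) = ENNReal.ofReal (1 - q) := by
    intro e
    rw [← Measure.map_apply (hU.1 e) measurableSet_Ioi, hU.2.2 e]
    unfold unif01
    rw [Measure.restrict_apply measurableSet_Ioi]
    have hinter : Set.Ioi q ∩ Set.Icc 0 1 = Set.Ioc q 1 := by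
      ext x
      simp only [Set.mem_inter_iff, Set.mem_Ioi, Set.mem_Icc, Set.mem_Ioc]
      constructor
      · rintro ⟨h1, _, h3⟩
        exact ⟨h1, h3⟩
      · rintro ⟨h1, h2⟩
        exact ⟨h1, le_of_lt (lt_of_le_of_lt hq0 h1), h2⟩
    rw [hinter, Real.volume_Ioc]
  have hInter : ∀ t : Finset (Sym2 ℤ),
      P (⋂ e ∈ t, U e ⁻¹' Set.Ioi q) = ∏ e ∈ t, P (U e ⁻¹' Set.Ioi q) :=
    fun t => hU.2.1.measure_inter_preimage_eq_mul t
      (sets := fun _ => Set.Ioi q) (fun _ _ => measurableSet_Ioi)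
  have hPB : ∀ k, P (B k) = ∏ e ∈ E k, P (U e ⁻¹' Set.Ioi q) := fun k => hInter (E k)
  have hEdisj : ∀ i j : ℕ, i ≠ j → Disjoint (E i) (E j) := by
    intro i j hne
    rw [Finset.disjoint_left]
    intro e hei hej
    simp only [hEdef, Finset.mem_image] at hei hej
    obtain ⟨p1, hp1, he1⟩ := hei
    obtain ⟨p2, hp2, he2⟩ := hej
    rw [← he2] at he1
    rw [mem_cutPairs] at hp1 hp2
    have hsp := hsep i j hne
    rw [Sym2.eq_iff] at he1
    rcases he1 with ⟨ha, hb⟩ | ⟨ha, hb⟩ <;> omega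
  have hIndep : iIndepSet B P := by
    rw [iIndepSet_iff_meas_biInter hBm]
    intro s
    have h1 : ⋂ k ∈ s, B k = ⋂ e ∈ s.biUnion E, U e ⁻¹' Set.Ioi q := by
      ext ω
      simp only [hBdef, Set.mem_iInter, Finset.mem_biUnion]
      constructor
      · rintro h e ⟨k, hk, he⟩
        exact h k hk e he
      · intro h k hk e he
        exact h e ⟨k, hk, he⟩
    rw [h1, hInter, Finset.prod_biUnion ?_]
    · exact Finset.prod_congr rfl fun k _ => (hPB k).symm
    · intro i hi j hj hij
      exact hEdisj i j hij
  have hcard : ∀ k, (E k).card ≤ R * R := by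
    intro k
    refine le_trans (Finset.card_image_le) (le_of_eq ?_)
    rw [cutPairs, Finset.card_product, Int.card_Ioc, Int.card_Ioc,
      show (ν k - (ν k - (R : ℤ))).toNat = R by omega,
      show (ν k + (R : ℤ) - ν k).toNat = R by omega]
  have h1q : (0 : ℝ) < 1 - q := by linarith
  have hPBl : ∀ k, ENNReal.ofReal ((1 - q) ^ (R * R)) ≤ P (B k) := by
    intro k
    rw [hPB k, Finset.prod_congr rfl fun e _ => hPA e, Finset.prod_const,
      ENNReal.ofReal_pow h1q.le]
    refine pow_le_pow_right_of_le_one' ?_ (hcard k)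
    exact ENNReal.ofReal_le_one.2 (by linarith)
  have htsum : ∑' k, P (B k) = ⊤ := by
    refine top_unique ?_
    calc (⊤ : ℝ≥0∞) = ∑' _k : ℕ, ENNReal.ofReal ((1 - q) ^ (R * R)) :=
          (ENNReal.tsum_const_eq_top_of_ne_zero
            (ENNReal.ofReal_pos.2 (pow_pos h1q _)).ne').symm
      _ ≤ ∑' k, P (B k) := ENNReal.tsum_le_tsum fun k => hPBl k
  have hlim : P (limsup B atTop) = 1 := measure_limsup_eq_one hBm hIndep htsum
  have hae : ∀ᵐ ω ∂P, ω ∈ limsup B atTop := by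
    rw [MeasureTheory.ae_iff]
    have hcompl : P (limsup B atTop)ᶜ = 0 := by
      rw [measure_compl (MeasurableSet.measurableSet_limsup hBm) (measure_ne_top _ _), hlim, measure_univ]
      simp
    exact hcompl
  filter_upwards [hae] with ω hω
  rw [Filter.mem_limsup_iff_frequently_mem] at hω
  refine hω.mono ?_
  intro k hk x y hx hy hxy
  have hmem : s(x, y) ∈ E k := by
    simp only [hEdef, Finset.mem_image]
    exact ⟨(x, y), mem_cutPairs.2 (by constructor <;> constructor <;> omega), rfl⟩
  simp only [hBdef, Set.mem_iInter] at hk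
  exact hk s(x, y) hmem

/-- Let `G` be a Cayley graph of the group `ℤ` with respect to a finite symmetric
generating set `S` (so `x ~ y` iff `x - y ∈ S`), and let `(G, c1)` and `(G, c2)` be two networks
on `G` with `sup_e c2(e) < ∞`. Then almost surely, for every `p ∈ [0,1)` simultaneously, the
disordered random network `(G, c1, c2, p)` is recurrent. -/
theorem statement_3
    (S : Finset ℤ) (G : SimpleGraph ℤ)
    (hAdj : ∀ x y : ℤ, G.Adj x y ↔ x - y ∈ S)
    (hgen : AddSubgroup.closure (S : Set ℤ) = ⊤)
    (c1 c2 : ℤ → ℤ → ℝ)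
    (hc1symm : ∀ x y, c1 x y = c1 y x) (hc1nonneg : ∀ x y, 0 ≤ c1 x y)
    (hc1supp : ∀ x y, ¬ G.Adj x y → c1 x y = 0)
    (hc2symm : ∀ x y, c2 x y = c2 y x) (hc2nonneg : ∀ x y, 0 ≤ c2 x y)
    (hc2supp : ∀ x y, ¬ G.Adj x y → c2 x y = 0)
    (c : ℝ) (hc2bdd : ∀ x y, c2 x y ≤ c)
    {Ω : Type*} [MeasurableSpace Ω] (P : Measure Ω) [IsProbabilityMeasure P]
    (U : Sym2 ℤ → Ω → ℝ) (hU : IsGrandCoupling P U) :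
    ∀ᵐ a ∂P, ∀ p : ℝ, 0 ≤ p → p < 1 →
      NetRecurrent G (dCond c1 c2 (fun e => U e a) p) := by
  classical
  have hS0 : (0 : ℤ) ∉ S := fun h => G.loopless.irrefl 0 ((hAdj 0 0).2 (by simpa using h))
  have hSne : S.Nonempty := by
    by_contra h
    rw [Finset.not_nonempty_iff_eq_empty] at h
    subst h
    rw [Finset.coe_empty, AddSubgroup.closure_empty] at hgen
    have h1 : (1 : ℤ) ∈ (⊥ : AddSubgroup ℤ) := hgen ▸ AddSubgroup.mem_top 1
    simpa using h1
  set R : ℕ := S.sup (fun s => s.natAbs) with hRdef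
  have hR1 : 1 ≤ R := by
    obtain ⟨s, hs⟩ := hSne
    have h1 : s.natAbs ≤ R := Finset.le_sup (f := fun s : ℤ => s.natAbs) hs
    have h2 : s ≠ 0 := fun h => hS0 (h ▸ hs)
    omega
  have hband : ∀ x y : ℤ, G.Adj x y → (x - y).natAbs ≤ R := fun x y h =>
    Finset.le_sup (f := fun s : ℤ => s.natAbs) ((hAdj x y).1 h)
  -- separated sequences of cut positions, to the right and to the left
  have hsep_aux : ∀ (σ : ℤ) (i j : ℕ), i ≠ j → R ≤ (σ * (R : ℤ) * i - σ * (R : ℤ) * j).natAbs →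
    True := fun _ _ _ _ _ => trivial
  have hsepP : ∀ i j : ℕ, i ≠ j → R ≤ (((R : ℤ) * i) - ((R : ℤ) * j)).natAbs := by
    intro i j hne
    rw [show (R : ℤ) * i - (R : ℤ) * j = (R : ℤ) * ((i : ℤ) - j) by ring, Int.natAbs_mul]
    have h2 : 1 ≤ ((i : ℤ) - j).natAbs := by omega
    have h3 : (R : ℤ).natAbs = R := Int.natAbs_natCast R
    calc R = R * 1 := (mul_one R).symm
      _ ≤ R * ((i : ℤ) - j).natAbs := Nat.mul_le_mul_left R h2
      _ = (R : ℤ).natAbs * ((i : ℤ) - j).natAbs := by rw [h3]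
  have hsepN : ∀ i j : ℕ, i ≠ j → R ≤ ((-((R : ℤ) * i)) - (-((R : ℤ) * j))).natAbs := by
    intro i j hne
    rw [show -((R : ℤ) * i) - -((R : ℤ) * j) = (R : ℤ) * ((j : ℤ) - i) by ring, Int.natAbs_mul]
    have h2 : 1 ≤ ((j : ℤ) - i).natAbs := by omega
    have h3 : (R : ℤ).natAbs = R := Int.natAbs_natCast R
    calc R = R * 1 := (mul_one R).symm
      _ ≤ R * ((j : ℤ) - i).natAbs := Nat.mul_le_mul_left R h2
      _ = (R : ℤ).natAbs * ((j : ℤ) - i).natAbs := by rw [h3]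
  have main : ∀ᵐ ω ∂P, ∀ qr : ℚ, 0 ≤ (qr : ℝ) → (qr : ℝ) < 1 →
      ((∃ᶠ k : ℕ in atTop, ∀ x y : ℤ, x ≤ (R : ℤ) * (k : ℤ) → (R : ℤ) * (k : ℤ) < y →
          (x - y).natAbs ≤ R → (qr : ℝ) < U s(x, y) ω)
        ∧ (∃ᶠ k : ℕ in atTop, ∀ x y : ℤ, x ≤ -((R : ℤ) * (k : ℤ)) → -((R : ℤ) * (k : ℤ)) < y →
          (x - y).natAbs ≤ R → (qr : ℝ) < U s(x, y) ω)) := by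
    rw [ae_all_iff]
    intro qr
    by_cases hq : 0 ≤ (qr : ℝ) ∧ (qr : ℝ) < 1
    · have h1 := blocked_cuts_as P U hU R (qr : ℝ) hq.1 hq.2
        (fun k => (R : ℤ) * k) hsepP
      have h2 := blocked_cuts_as P U hU R (qr : ℝ) hq.1 hq.2
        (fun k => -((R : ℤ) * k)) hsepN
      filter_upwards [h1, h2] with ω w1 w2 _ _
      exact ⟨w1, w2⟩
    · filter_upwards with ω h1 h2
      exact absurd ⟨h1, h2⟩ hq
  filter_upwards [main] with ω hω p hp0 hp1
  obtain ⟨qr, hq1, hq2⟩ := exists_rat_btwn hp1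
  have hqr0 : 0 ≤ (qr : ℝ) := le_of_lt (lt_of_le_of_lt hp0 hq1)
  obtain ⟨hpos, hneg⟩ := hω qr hqr0 hq2
  refine det_recurrent G R hR1 hband (dCond c1 c2 (fun e => U e ω) p) (max c 1)
    (lt_of_lt_of_le zero_lt_one (le_max_right c 1))
    (fun n => ∀ x y : ℤ, G.Adj x y → x ≤ n → n < y → p < U s(x, y) ω) ?_ ?_ ?_
  · intro n hBn x y hadj hx hy
    have hlbl := hBn x y hadj hx hy
    unfold dCond
    rw [if_neg (not_le.2 hlbl)]
    exact le_trans (hc2bdd x y) (le_max_left c 1)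
  · intro m
    obtain ⟨k, hk1, hk2⟩ := (frequently_atTop.1 hpos) m.toNat
    refine ⟨(R : ℤ) * k, ?_, ?_⟩
    · have h1 : (m.toNat : ℤ) ≤ (k : ℤ) := by exact_mod_cast hk1
      have h2 : (k : ℤ) ≤ (R : ℤ) * k :=
        le_mul_of_one_le_left (Int.ofNat_nonneg k) (by exact_mod_cast hR1)
      omega
    · intro x y hadj hx hy
      exact lt_trans hq1 (hk2 x y hx hy (hband x y hadj))
  · intro m
    obtain ⟨k, hk1, hk2⟩ := (frequently_atTop.1 hneg) (-m).toNat
    refine ⟨-((R : ℤ) * k), ?_, ?_⟩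
    · have h1 : ((-m).toNat : ℤ) ≤ (k : ℤ) := by exact_mod_cast hk1
      have h2 : (k : ℤ) ≤ (R : ℤ) * k :=
        le_mul_of_one_le_left (Int.ofNat_nonneg k) (by exact_mod_cast hR1)
      omega
    · intro x y hadj hx hy
      exact lt_trans hq1 (hk2 x y hx hy (hband x y hadj))

end
end

section
/- Every connected, locally finite, quasi-transitive infinite graph G with a fixed root o admits a spanning tree 𝒯 (a geodesic spanning tree) such that the distance in 𝒯 from o to each vertex equals the distance in G, and the branching number, the growth rate of 𝒯, and the growth rate of G all coincide: br(𝒯) = gr(𝒯) = gr(G). -/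
open MeasureTheory ProbabilityTheory Filter
open scoped ENNReal Classical

noncomputable section

variable {V : Type*}

/-- The distance from an edge `e = {x,y}` to the root `o`: `min(dist(o,x), dist(o,y))`. -/
def edgeDistToRoot (G : SimpleGraph V) (o : V) : Sym2 V → ℕ :=
  Sym2.lift ⟨fun x y => min (G.dist o x) (G.dist o y), fun _ _ => min_comm _ _⟩

/-- A finite set of edges of `T` is a cutset separating the root `o` from infinity if after
deleting it, the connected component of `o` is finite. -/
def IsCutset (T : SimpleGraph V) (o : V) (C : Finset (Sym2 V)) : Prop :=
  (∀ e ∈ C, e ∈ T.edgeSet) ∧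
    {y : V | (T.deleteEdges (C : Set (Sym2 V))).Reachable o y}.Finite

/-- The branching number of the tree `T` rooted at `o`:
`br(T) = sup {λ ≥ 0 : inf_Π ∑_{e∈Π} λ^{−|e|} > 0}`, the infimum running over all cutsets
separating the root from infinity. -/
def branchingNumber (T : SimpleGraph V) (o : V) : ℝ :=
  sSup {l : ℝ | 0 ≤ l ∧ ∃ ε : ℝ, 0 < ε ∧
    ∀ C : Finset (Sym2 V), IsCutset T o C →
      ε ≤ ∑ e ∈ C, l ^ (-(edgeDistToRoot T o e : ℤ))}

namespace St14

variable {V : Type*} (G : SimpleGraph V)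

lemma exists_parent (hconn : G.Connected) (o : V) {v : V} (hv : v ≠ o) :
    ∃ u, G.Adj u v ∧ G.dist o u + 1 = G.dist o v := by
  have hne : v ≠ o := hv
  have hd : G.dist o v ≠ 0 := by
    rw [SimpleGraph.dist_ne_zero_iff_ne_and_reachable]
    exact ⟨Ne.symm hv, hconn o v⟩
  obtain ⟨p, hp⟩ := SimpleGraph.exists_walk_of_dist_ne_zero (by rwa [SimpleGraph.dist_comm] at hd)
  -- p : G.Walk v o with p.length = G.dist v o
  obtain ⟨u, hadj, q, hq⟩ := p.exists_eq_cons_of_ne hv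
  refine ⟨u, hadj.symm, ?_⟩
  have hql : q.length + 1 = G.dist o v := by
    rw [SimpleGraph.dist_comm, ← hp, hq]; simp [SimpleGraph.Walk.length_cons]
  have h1 : G.dist o u ≤ q.length := by
    have := SimpleGraph.dist_le q.reverse
    simpa [SimpleGraph.Walk.length_reverse] using this
  have h2 : G.dist o v ≤ G.dist o u + 1 := by
    have htr := hconn.dist_triangle (u := o) (v := u) (w := v)
    have : G.dist u v ≤ 1 := by
      have := SimpleGraph.dist_le (hadj.symm.toWalk)
      simpa using this
    omega
  omega

/-- parent function -/
def gpar (hconn : G.Connected) (o : V) (v : V) : V :=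
  if h : v = o then o else Classical.choose (exists_parent G hconn o h)

variable {G}
variable (hconn : G.Connected) (o : V)

lemma gpar_spec {v : V} (hv : v ≠ o) :
    G.Adj (gpar G hconn o v) v ∧ G.dist o (gpar G hconn o v) + 1 = G.dist o v := by
  rw [gpar, dif_neg hv]
  exact Classical.choose_spec (exists_parent G hconn o hv)

lemma gpar_adj {v : V} (hv : v ≠ o) : G.Adj (gpar G hconn o v) v := (gpar_spec hconn o hv).1

lemma gpar_dist {v : V} (hv : v ≠ o) :
    G.dist o (gpar G hconn o v) + 1 = G.dist o v := (gpar_spec hconn o hv).2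

lemma gpar_ne {v : V} (hv : v ≠ o) : gpar G hconn o v ≠ v := by
  intro h
  have := gpar_dist hconn o hv
  rw [h] at this; omega

/-- the BFS (parent) spanning tree -/
def ptree : SimpleGraph V where
  Adj x y := (x ≠ o ∧ gpar G hconn o x = y) ∨ (y ≠ o ∧ gpar G hconn o y = x)
  symm := ⟨by intro x y h; tauto⟩
  loopless := ⟨by
    intro x h
    rcases h with ⟨hx, he⟩ | ⟨hx, he⟩ <;> exact gpar_ne hconn o hx he⟩

lemma ptree_le : ptree hconn o ≤ G := by
  intro x y h
  rcases h with ⟨hx, he⟩ | ⟨hy, he⟩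
  · exact he ▸ (gpar_adj hconn o hx).symm
  · exact he ▸ (gpar_adj hconn o hy)

lemma ptree_adj_par {v : V} (hv : v ≠ o) : (ptree hconn o).Adj (gpar G hconn o v) v :=
  Or.inr ⟨hv, rfl⟩

lemma ptree_walk (v : V) : ∃ p : (ptree hconn o).Walk o v, p.length = G.dist o v := by
  generalize hd : G.dist o v = d
  induction d generalizing v with
  | zero =>
    have : o = v := by
      by_contra h
      have := gpar_dist hconn o (Ne.symm h)
      omega
    subst this
    exact ⟨SimpleGraph.Walk.nil, rfl⟩
  | succ d ih =>
    have hv : v ≠ o := by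
      intro h; subst h; rw [SimpleGraph.dist_self] at hd; omega
    obtain ⟨p, hp⟩ := ih (gpar G hconn o v) (by have := gpar_dist hconn o hv; omega)
    exact ⟨p.concat (ptree_adj_par hconn o hv), by simp [SimpleGraph.Walk.length_concat, hp]⟩

lemma ptree_reachable (v : V) : (ptree hconn o).Reachable o v := by
  obtain ⟨p, _⟩ := ptree_walk hconn o v
  exact ⟨p⟩

lemma ptree_connected : (ptree hconn o).Connected := by
  have : Nonempty V := ⟨o⟩
  rw [SimpleGraph.connected_iff]
  refine ⟨fun u v => ?_, this⟩
  exact (ptree_reachable hconn o u).symm.trans (ptree_reachable hconn o v)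

lemma ptree_dist (v : V) : (ptree hconn o).dist o v = G.dist o v := by
  refine le_antisymm ?_ ?_
  · obtain ⟨p, hp⟩ := ptree_walk hconn o v
    exact hp ▸ SimpleGraph.dist_le p
  · exact SimpleGraph.Reachable.dist_anti (ptree_le hconn o) (ptree_reachable hconn o v)

lemma ptree_adj_dist {x y : V} (h : (ptree hconn o).Adj x y) :
    (y ≠ o ∧ gpar G hconn o y = x ∧ G.dist o x + 1 = G.dist o y) ∨
    (x ≠ o ∧ gpar G hconn o x = y ∧ G.dist o y + 1 = G.dist o x) := by
  rcases h with ⟨hx, he⟩ | ⟨hy, he⟩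
  · exact Or.inr ⟨hx, he, by rw [← he]; exact gpar_dist hconn o hx⟩
  · exact Or.inl ⟨hy, he, by rw [← he]; exact gpar_dist hconn o hy⟩

lemma ptree_acyclic : (ptree hconn o).IsAcyclic := by
  intro v c hc
  -- pick a vertex of maximal level on the cycle
  obtain ⟨u, hu, hmax⟩ : ∃ u ∈ c.support, ∀ x ∈ c.support, G.dist o x ≤ G.dist o u := by
    obtain ⟨u, hu, hsup⟩ := Finset.exists_mem_eq_sup c.support.toFinset
      (by simpa using c.support_ne_nil) (fun x => G.dist o x)
    refine ⟨u, by simpa using hu, fun x hx => ?_⟩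
    rw [← hsup]
    exact Finset.le_sup (by simpa using hx)
  have hc' := hc.rotate hu
  set c' := c.rotate u hu with hc'def
  have hsub : ∀ x, x ∈ c'.support → x ∈ c.support := by
    intro x hx
    rw [c'.support_eq_cons] at hx
    rcases List.mem_cons.mp hx with hx | hx
    · exact hx ▸ hu
    · have hperm := c.support_rotate u hu
      have : x ∈ c.support.tail := (hperm.perm.mem_iff).mp hx
      rw [c.support_eq_cons]
      exact List.mem_cons_of_mem _ this
  clear_value c'
  clear hc hc'def
  cases c' with
  | nil => exact absurd hc'.three_le_length (by simp)
  | @cons _ b _ h q =>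
    rw [SimpleGraph.Walk.cons_isCycle_iff] at hc'
    obtain ⟨hq, hne⟩ := hc'
    have hbsup : b ∈ q.support := q.start_mem_support
    have hbc : b ∈ (SimpleGraph.Walk.cons h q).support := by
      rw [SimpleGraph.Walk.support_cons]; exact List.mem_cons_of_mem _ hbsup
    have huo : u ≠ o ∧ gpar G hconn o u = b := by
      rcases ptree_adj_dist hconn o h with ⟨hbo, hg, hd⟩ | ⟨huo, hg, hd⟩
      · -- b's parent is u: level of b is level u + 1 > level u, contradiction with max
        have := hmax b (hsub b hbc)
        omega
      · exact ⟨huo, hg⟩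
    have hub : u ≠ b := fun h' => gpar_ne hconn o huo.1 (h' ▸ huo.2)
    obtain ⟨w, hadj, r, hqr⟩ := q.reverse.exists_eq_cons_of_ne hub
    have hwsup : w ∈ q.support := by
      have : w ∈ q.reverse.support := by
        rw [hqr, SimpleGraph.Walk.support_cons]
        exact List.mem_cons_of_mem _ r.start_mem_support
      simpa using this
    have hwc : w ∈ (SimpleGraph.Walk.cons h q).support := by
      rw [SimpleGraph.Walk.support_cons]; exact List.mem_cons_of_mem _ hwsup
    have hwpar : w = gpar G hconn o u := by
      rcases ptree_adj_dist hconn o hadj with ⟨hwo, hg, hd⟩ | ⟨huo', hg, hd⟩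
      · have := hmax w (hsub w hwc)
        omega
      · exact hg.symm
    have hwb : w = b := hwpar.trans huo.2
    have : s(u, w) ∈ q.reverse.edges := by
      rw [hqr]
      simp [SimpleGraph.Walk.edges_cons]
    rw [SimpleGraph.Walk.edges_reverse, List.mem_reverse] at this
    rw [hwb] at this
    exact hne this

section Counting

lemma ncard_biUnion_le {α β : Type*} (s : Finset α) (t : α → Set β) :
    (⋃ x ∈ s, t x).ncard ≤ ∑ x ∈ s, (t x).ncard := by
  classical
  induction s using Finset.induction with
  | empty => simp
  | @insert x s hx ih =>
    rw [Finset.sum_insert hx]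
    refine le_trans (le_of_eq (by rw [Finset.set_biUnion_insert])) ?_
    exact le_trans (Set.ncard_union_le _ _) (by omega)


variable [∀ v : V, Fintype (G.neighborSet v)] [Infinite V]

include hconn

lemma Bfin : ∀ n : ℕ, {y : V | G.dist o y ≤ n}.Finite := by
  intro n
  induction n with
  | zero =>
    refine (Set.finite_singleton o).subset ?_
    intro y hy
    simp only [Set.mem_setOf_eq, Nat.le_zero] at hy
    have : o = y := (hconn.dist_eq_zero_iff).mp hy
    simp [← this]
  | succ n ihn =>
    refine (ihn.biUnion
      (fun x _ => (Set.Finite.insert x (G.neighborSet x).toFinite))).subset ?_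
    intro y hy
    simp only [Set.mem_setOf_eq] at hy
    rcases Nat.lt_or_ge (G.dist o y) (n+1) with h | h
    · exact Set.mem_biUnion (show y ∈ {y : V | G.dist o y ≤ n} from Nat.lt_succ_iff.mp h)
        (Set.mem_insert _ _)
    · have hd : G.dist o y = n + 1 := le_antisymm hy h
      have hy0 : y ≠ o := by
        intro he; rw [he, SimpleGraph.dist_self] at hd; omega
      refine Set.mem_biUnion (show gpar G hconn o y ∈ {y : V | G.dist o y ≤ n} from ?_) ?_
      · have := gpar_dist hconn o hy0
        simp only [Set.mem_setOf_eq]; omega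
      · exact Set.mem_insert_of_mem _ (gpar_adj hconn o hy0)

omit hconn in
/-- ball cardinality -/
def aB (G : SimpleGraph V) (o : V) (n : ℕ) : ℕ := {y : V | G.dist o y ≤ n}.ncard

lemma aB_mono : Monotone (aB G o) := by
  intro n m h
  exact Set.ncard_le_ncard (fun y hy => le_trans hy h) (Bfin hconn o m)

lemma aB_pos (n : ℕ) : 1 ≤ aB G o n := by
  have h := (Set.ncard_pos (Bfin hconn o n)).mpr ⟨o, by simp only [Set.mem_setOf_eq, SimpleGraph.dist_self]; omega⟩
  exact h

lemma aB_succ_le {Δ : ℕ} (hΔ : ∀ v : V, (G.neighborSet v).ncard ≤ Δ) (n : ℕ) :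
    aB G o (n+1) ≤ aB G o n * (Δ + 1) := by
  have hsub : {y : V | G.dist o y ≤ (n+1)} ⊆
      ⋃ x ∈ (Bfin hconn o n).toFinset, insert x (G.neighborSet x) := by
    intro y hy
    simp only [Set.mem_setOf_eq] at hy
    rcases Nat.lt_or_ge (G.dist o y) (n+1) with h | h
    · refine Set.mem_biUnion (show y ∈ (Bfin hconn o n).toFinset from ?_) (Set.mem_insert _ _)
      simp only [Set.Finite.mem_toFinset, Set.mem_setOf_eq]
      omega
    · have hd : G.dist o y = n + 1 := le_antisymm hy h
      have hy0 : y ≠ o := by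
        intro he; rw [he, SimpleGraph.dist_self] at hd; omega
      refine Set.mem_biUnion (show gpar G hconn o y ∈ (Bfin hconn o n).toFinset from ?_)
        (Set.mem_insert_of_mem _ (gpar_adj hconn o hy0))
      have := gpar_dist hconn o hy0
      simp only [Set.Finite.mem_toFinset, Set.mem_setOf_eq]
      omega
  calc aB G o (n+1)
      ≤ (⋃ x ∈ (Bfin hconn o n).toFinset, insert x (G.neighborSet x)).ncard := by
        refine Set.ncard_le_ncard hsub ?_
        exact Set.Finite.biUnion (Set.finite_mem_finset _)
          (fun x _ => (Set.Finite.insert x (G.neighborSet x).toFinite))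
    _ ≤ ∑ x ∈ (Bfin hconn o n).toFinset, (insert x (G.neighborSet x)).ncard :=
        ncard_biUnion_le ((Bfin hconn o n).toFinset) (fun x => insert x (G.neighborSet x))
    _ ≤ ∑ _x ∈ (Bfin hconn o n).toFinset, (Δ + 1) := by
        refine Finset.sum_le_sum (fun x _ => ?_)
        exact le_trans (Set.ncard_insert_le _ _) (by have := hΔ x; omega)
    _ = aB G o n * (Δ + 1) := by
        rw [Finset.sum_const, smul_eq_mul, aB, Set.ncard_eq_toFinset_card _ (Bfin hconn o n)]

lemma exists_deg_bound (hqt : QuasiTransitive G) :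
    ∃ Δ : ℕ, ∀ v : V, (G.neighborSet v).ncard ≤ Δ := by
  obtain ⟨s, hs⟩ := hqt
  refine ⟨s.sup (fun y => (G.neighborSet y).ncard), fun v => ?_⟩
  obtain ⟨y, hy, φ, hφ⟩ := hs v
  have : (G.neighborSet v).ncard = (G.neighborSet y).ncard := by
    rw [← hφ, ← Nat.card_coe_set_eq, ← Nat.card_coe_set_eq]
    exact Nat.card_congr (φ.mapNeighborSet y).symm
  rw [this]
  exact Finset.le_sup (f := fun z : V => (G.neighborSet z).ncard) hy

lemma iso_dist (φ : G ≃g G) (x y : V) : G.dist (φ x) (φ y) = G.dist x y := by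
  have key : ∀ (ψ : G ≃g G) (a b : V), G.dist (ψ a) (ψ b) ≤ G.dist a b := by
    intro ψ a b
    obtain ⟨p, hp⟩ := (hconn a b).exists_walk_length_eq_dist
    calc G.dist (ψ a) (ψ b) ≤ (p.map ψ.toHom).length := SimpleGraph.dist_le _
      _ = G.dist a b := by rw [SimpleGraph.Walk.length_map, hp]
  refine le_antisymm (key φ x y) ?_
  have := key φ.symm (φ x) (φ y)
  simpa using this

lemma sphere_nonempty (n : ℕ) : ∃ v : V, G.dist o v = n := by
  by_contra h
  push_neg at h
  have key : ∀ m : ℕ, ∀ v : V, G.dist o v = m → m < n := by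
    intro m
    induction m using Nat.strong_induction_on with
    | _ m ih =>
      intro v hv
      by_contra hm
      push_neg at hm
      rcases Nat.lt_or_ge n m with h2 | h2
      · have hv0 : v ≠ o := by
          intro he; rw [he, SimpleGraph.dist_self] at hv; omega
        have hp := gpar_dist hconn o hv0
        exact absurd (ih (m-1) (by omega) (gpar G hconn o v) (by omega)) (by omega)
      · exact h v (by omega)
  have : ∀ v : V, G.dist o v < n := fun v => key _ v rfl
  have : (Set.univ : Set V).Finite := by
    refine (Bfin hconn o n).subset (fun v _ => ?_)
    exact le_of_lt (this v)
  exact Set.infinite_univ this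

lemma aB_lb (n : ℕ) : n + 1 ≤ aB G o n := by
  have hch : ∀ k : ℕ, ∃ v : V, G.dist o v = k := sphere_nonempty hconn o
  choose f hf using hch
  have hinj : Function.Injective (fun k : Fin (n+1) => f k) := by
    intro i j hij
    have h2 := congrArg (G.dist o) hij
    simp only [hf] at h2
    exact Fin.ext h2
  calc n + 1 = (Finset.univ.image (fun k : Fin (n+1) => f k)).card := by
        rw [Finset.card_image_of_injective _ hinj, Finset.card_univ, Fintype.card_fin]
    _ = ((Finset.univ.image (fun k : Fin (n+1) => f k) : Finset V) : Set V).ncard := by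
        rw [Set.ncard_coe_finset]
    _ ≤ aB G o n := by
        refine Set.ncard_le_ncard ?_ (Bfin hconn o n)
        intro v hv
        simp only [Finset.coe_image, Set.mem_image] at hv
        obtain ⟨k, _, rfl⟩ := hv
        simp only [Set.mem_setOf_eq, hf]
        omega

lemma iso_ball (φ : G ≃g G) (y : V) (r : ℕ) :
    {w : V | G.dist (φ y) w ≤ r} = φ '' {w : V | G.dist y w ≤ r} := by
  ext w
  simp only [Set.mem_setOf_eq, Set.mem_image]
  constructor
  · intro hw
    refine ⟨φ.symm w, ?_, by simp⟩
    have h1 : G.dist (φ y) (φ (φ.symm w)) = G.dist y (φ.symm w) := iso_dist hconn φ y _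
    have h2 : φ (φ.symm w) = w := by simp
    rw [h2] at h1
    omega
  · rintro ⟨u, hu, rfl⟩
    rw [iso_dist hconn φ]
    exact hu

lemma xball_card {s : Finset V} (hs : ∀ x : V, ∃ y ∈ s, ∃ φ : G ≃g G, φ y = x)
    (x : V) (r : ℕ) :
    {w : V | G.dist x w ≤ r}.ncard ≤ aB G o (r + s.sup (fun y => G.dist o y)) := by
  obtain ⟨y, hy, φ, hφ⟩ := hs x
  have h1 : {w : V | G.dist x w ≤ r}.ncard = {w : V | G.dist y w ≤ r}.ncard := by
    rw [← hφ, iso_ball hconn φ y r, Set.ncard_image_of_injective _ φ.injective]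
  rw [h1]
  refine Set.ncard_le_ncard ?_ (Bfin hconn o (r + s.sup (fun y => G.dist o y)))
  intro w hw
  simp only [Set.mem_setOf_eq] at *
  have h2 := hconn.dist_triangle (u := o) (v := y) (w := w)
  have h3 : G.dist o y ≤ s.sup (fun y => G.dist o y) := Finset.le_sup hy
  omega

lemma exists_intermediate (w : V) (k : ℕ) :
    ∃ x : V, G.dist o x = G.dist o w - k ∧ G.dist x w ≤ k := by
  induction k with
  | zero => exact ⟨w, by simp, by simp⟩
  | succ k ih =>
    obtain ⟨x, hx1, hx2⟩ := ih
    by_cases hxo : x = o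
    · refine ⟨x, ?_, by omega⟩
      rw [hxo] at hx1 ⊢
      rw [SimpleGraph.dist_self] at hx1 ⊢
      omega
    · have hp := gpar_dist hconn o hxo
      refine ⟨gpar G hconn o x, by omega, ?_⟩
      have h1 := hconn.dist_triangle (u := gpar G hconn o x) (v := x) (w := w)
      have h2 : G.dist (gpar G hconn o x) x ≤ 1 := by
        have := SimpleGraph.dist_le (gpar_adj hconn o hxo).toWalk
        simpa using this
      omega

lemma aB_submul {s : Finset V} (hs : ∀ x : V, ∃ y ∈ s, ∃ φ : G ≃g G, φ y = x) (n m : ℕ) :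
    aB G o (n + m) ≤ aB G o n * aB G o (m + s.sup (fun y => G.dist o y)) := by
  have hsub : {y : V | G.dist o y ≤ n + m} ⊆
      ⋃ x ∈ (Bfin hconn o n).toFinset, {w : V | G.dist x w ≤ m} := by
    intro w hw
    simp only [Set.mem_setOf_eq] at hw
    obtain ⟨x, hx1, hx2⟩ := exists_intermediate hconn o w m
    refine Set.mem_biUnion (show x ∈ (Bfin hconn o n).toFinset from ?_)
      (show w ∈ {w : V | G.dist x w ≤ m} from hx2)
    simp only [Set.Finite.mem_toFinset, Set.mem_setOf_eq]
    omega
  calc aB G o (n + m)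
      ≤ (⋃ x ∈ (Bfin hconn o n).toFinset, {w : V | G.dist x w ≤ m}).ncard :=
        Set.ncard_le_ncard hsub (Set.Finite.biUnion (Set.finite_mem_finset _)
          (fun x _ => Bfin hconn x m))
    _ ≤ ∑ x ∈ (Bfin hconn o n).toFinset, {w : V | G.dist x w ≤ m}.ncard :=
        ncard_biUnion_le _ _
    _ ≤ ∑ _x ∈ (Bfin hconn o n).toFinset, aB G o (m + s.sup (fun y => G.dist o y)) :=
        Finset.sum_le_sum (fun x _ => xball_card hconn o hs x m)
    _ = aB G o n * aB G o (m + s.sup (fun y => G.dist o y)) := by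
        have hcard : aB G o n = (Bfin hconn o n).toFinset.card :=
          Set.ncard_eq_toFinset_card _ (Bfin hconn o n)
        rw [Finset.sum_const, smul_eq_mul, hcard]

lemma aB_cast_pos (n : ℕ) : (1 : ℝ) ≤ (aB G o n : ℝ) := by
  exact_mod_cast aB_pos hconn o n

lemma aB_subadditive {s : Finset V} (hs : ∀ x : V, ∃ y ∈ s, ∃ φ : G ≃g G, φ y = x) :
    Subadditive (fun n => Real.log (aB G o (n + s.sup (fun y => G.dist o y)))) := by
  intro p q
  set D := s.sup (fun y => G.dist o y)
  have h : aB G o (p + q + D) ≤ aB G o (p + D) * aB G o (q + D) := by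
    have := aB_submul hconn o hs (p + D) q
    have he : p + D + q = p + q + D := by omega
    rwa [he] at this
  have hc : (aB G o (p + q + D) : ℝ) ≤ (aB G o (p + D) : ℝ) * (aB G o (q + D) : ℝ) := by
    exact_mod_cast h
  calc Real.log (aB G o (p + q + D)) ≤ Real.log ((aB G o (p + D) : ℝ) * (aB G o (q + D) : ℝ)) := by
        refine Real.log_le_log ?_ hc
        have := aB_cast_pos hconn o (p + q + D); linarith
    _ = _ := by
        rw [Real.log_mul (by have := aB_cast_pos hconn o (p + D); linarith)
          (by have := aB_cast_pos hconn o (q + D); linarith)]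

lemma aB_bddBelow (D : ℕ) :
    BddBelow (Set.range fun n : ℕ => Real.log (aB G o (n + D)) / n) := by
  refine ⟨0, fun x hx => ?_⟩
  obtain ⟨n, rfl⟩ := hx
  have h1 : (0:ℝ) ≤ Real.log (aB G o (n + D)) := Real.log_nonneg (aB_cast_pos hconn o _)
  positivity

lemma growth_tendsto {s : Finset V} (hs : ∀ x : V, ∃ y ∈ s, ∃ φ : G ≃g G, φ y = x) :
    Tendsto (fun n : ℕ => (aB G o n : ℝ) ^ ((n : ℝ)⁻¹)) atTop
      (nhds (Real.exp ((aB_subadditive hconn o hs).lim))) := by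
  set D := s.sup (fun y => G.dist o y) with hD
  set u : ℕ → ℝ := fun n => Real.log (aB G o (n + D)) with hu
  set L := (aB_subadditive hconn o hs).lim with hL
  have h1 : Tendsto (fun n : ℕ => u n / n) atTop (nhds L) :=
    (aB_subadditive hconn o hs).tendsto_lim (aB_bddBelow hconn o D)
  have hshift : Tendsto (fun n : ℕ => n - D) atTop atTop := tendsto_sub_atTop_nat D
  have h2 : Tendsto (fun n : ℕ => u (n - D) / ((n - D : ℕ) : ℝ)) atTop (nhds L) :=
    h1.comp hshift
  have h3 : Tendsto (fun n : ℕ => ((n - D : ℕ) : ℝ) / (n : ℝ)) atTop (nhds 1) := by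
    have hb : Tendsto (fun n : ℕ => 1 - (D : ℝ) / n) atTop (nhds 1) := by
      have := tendsto_const_div_atTop_nhds_zero_nat (D : ℝ)
      have h := (tendsto_const_nhds (x := (1:ℝ)) (f := atTop)).sub this
      simpa using h
    refine hb.congr' ?_
    filter_upwards [eventually_ge_atTop (D + 1)] with n hn
    have hn0 : (n : ℝ) ≠ 0 := Nat.cast_ne_zero.mpr (by omega)
    rw [Nat.cast_sub (by omega)]
    field_simp
  have h4 : Tendsto (fun n : ℕ => u (n - D) / ((n - D : ℕ) : ℝ) * (((n - D : ℕ) : ℝ) / n))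
      atTop (nhds (L * 1)) := h2.mul h3
  have h5 : Tendsto (fun n : ℕ => Real.log (aB G o n) / n) atTop (nhds L) := by
    rw [← mul_one L]
    refine h4.congr' ?_
    filter_upwards [eventually_ge_atTop (D + 1)] with n hn
    have hnd : ((n - D : ℕ) : ℝ) ≠ 0 := Nat.cast_ne_zero.mpr (by omega)
    have he : n - D + D = n := by omega
    rw [div_mul_div_comm, mul_comm (((n - D : ℕ) : ℝ)) ((n:ℝ)), ← div_mul_div_comm]
    rw [hu]
    simp only [he]
    rw [div_self hnd, mul_one]
  have h6 : Tendsto (fun n : ℕ => Real.exp (Real.log (aB G o n) / n)) atTop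
      (nhds (Real.exp L)) := (Real.continuous_exp.tendsto L).comp h5
  refine h6.congr ?_
  intro n
  rw [Real.rpow_def_of_pos (by have := aB_cast_pos hconn o n; linarith), div_eq_mul_inv]

lemma growth_lb {s : Finset V} (hs : ∀ x : V, ∃ y ∈ s, ∃ φ : G ≃g G, φ y = x) (n : ℕ) :
    Real.exp ((aB_subadditive hconn o hs).lim) ^ n
      ≤ (aB G o (n + s.sup (fun y => G.dist o y)) : ℝ) := by
  set D := s.sup (fun y => G.dist o y)
  set L := (aB_subadditive hconn o hs).lim with hL
  rcases Nat.eq_zero_or_pos n with rfl | hn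
  · simpa using aB_cast_pos hconn o D
  · have h1 : L ≤ Real.log (aB G o (n + D)) / n :=
      (aB_subadditive hconn o hs).lim_le_div (aB_bddBelow hconn o D) (by omega)
    have h2 : (n : ℝ) * L ≤ Real.log (aB G o (n + D)) := by
      have hn' : (0:ℝ) < (n : ℝ) := by exact_mod_cast hn
      calc (n : ℝ) * L ≤ (n : ℝ) * (Real.log (aB G o (n + D)) / n) :=
            mul_le_mul_of_nonneg_left h1 (le_of_lt hn')
        _ = Real.log (aB G o (n + D)) := by field_simp
    calc Real.exp L ^ n = Real.exp ((n : ℝ) * L) := by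
          rw [← Real.exp_nat_mul]
      _ ≤ Real.exp (Real.log (aB G o (n + D))) := Real.exp_le_exp.mpr h2
      _ = (aB G o (n + D) : ℝ) := Real.exp_log (by have := aB_cast_pos hconn o (n + D); linarith)

lemma growth_ub {s : Finset V} (hs : ∀ x : V, ∃ y ∈ s, ∃ φ : G ≃g G, φ y = x)
    {ν : ℝ} (hν : Real.exp ((aB_subadditive hconn o hs).lim) < ν) :
    ∀ᶠ n : ℕ in atTop, (aB G o n : ℝ) ≤ ν ^ n := by
  have h1 := growth_tendsto hconn o hs
  have h2 : ∀ᶠ n : ℕ in atTop, (aB G o n : ℝ) ^ ((n : ℝ)⁻¹) < ν :=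
    h1.eventually_lt_const hν
  filter_upwards [h2, eventually_ge_atTop 1] with n hn hn1
  have hb : (0:ℝ) ≤ (aB G o n : ℝ) ^ ((n : ℝ)⁻¹) :=
    Real.rpow_nonneg (by have := aB_cast_pos hconn o n; linarith) _
  have h3 : ((aB G o n : ℝ) ^ ((n : ℝ)⁻¹)) ^ (n : ℕ) ≤ ν ^ n :=
    pow_le_pow_left₀ hb (le_of_lt hn) n
  have h4 : ((aB G o n : ℝ) ^ ((n : ℝ)⁻¹)) ^ (n : ℕ) = (aB G o n : ℝ) := by
    rw [← Real.rpow_natCast ((aB G o n : ℝ) ^ ((n : ℝ)⁻¹)) n, ← Real.rpow_mul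
      (by have := aB_cast_pos hconn o n; linarith)]
    rw [inv_mul_cancel₀ (Nat.cast_ne_zero.mpr (by omega) : (n:ℝ) ≠ 0), Real.rpow_one]
  rwa [h4] at h3

lemma growth_ge_one {s : Finset V} (hs : ∀ x : V, ∃ y ∈ s, ∃ φ : G ≃g G, φ y = x) :
    1 ≤ Real.exp ((aB_subadditive hconn o hs).lim) := by
  refine ge_of_tendsto' (growth_tendsto hconn o hs) (fun n => ?_)
  exact Real.one_le_rpow (aB_cast_pos hconn o n) (by positivity)
lemma edgeDist_eq {y : V} (hy : y ≠ o) :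
    edgeDistToRoot (ptree hconn o) o s(gpar G hconn o y, y) + 1 = G.dist o y := by
  have h1 := gpar_dist hconn o hy
  have h2 : edgeDistToRoot (ptree hconn o) o s(gpar G hconn o y, y)
      = min ((ptree hconn o).dist o (gpar G hconn o y)) ((ptree hconn o).dist o y) := rfl
  rw [h2, ptree_dist hconn o, ptree_dist hconn o]
  omega

lemma child_eq {y z : V} (hy : y ≠ o) (hz : z ≠ o)
    (h : s(gpar G hconn o y, y) = s(gpar G hconn o z, z)) : y = z := by
  rw [Sym2.eq_iff] at h
  rcases h with ⟨_, h⟩ | ⟨h1, h2⟩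
  · exact h
  · exfalso
    have d1 := gpar_dist hconn o hy
    have d2 := gpar_dist hconn o hz
    rw [h1] at d1
    rw [← h2] at d2
    omega

lemma tree_edge {e : Sym2 V} (he : e ∈ (ptree hconn o).edgeSet) :
    ∃ y, y ≠ o ∧ e = s(gpar G hconn o y, y) := by
  induction e using Sym2.ind with
  | _ x z =>
    rw [SimpleGraph.mem_edgeSet] at he
    rcases he with ⟨hx, hg⟩ | ⟨hz, hg⟩
    · refine ⟨x, hx, ?_⟩
      rw [hg]
      exact Sym2.eq_swap
    · refine ⟨z, hz, ?_⟩
      rw [hg]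

lemma del_walk {C : Finset (Sym2 V)} {n : ℕ}
    (hC : ∀ y : V, y ≠ o → G.dist o y = n + 1 → s(gpar G hconn o y, y) ∈ C) :
    ∀ {x w : V} (_ : ((ptree hconn o).deleteEdges (C : Set (Sym2 V))).Walk x w),
      G.dist o x ≤ n → G.dist o w ≤ n := by
  intro x w p
  induction p with
  | nil => exact fun h => h
  | @cons x z w h q ih =>
    intro hx
    refine ih ?_
    rw [SimpleGraph.deleteEdges_adj] at h
    obtain ⟨hadj, hne⟩ := h
    rcases ptree_adj_dist hconn o hadj with ⟨hzo, hg, hd⟩ | ⟨hxo, hg, hd⟩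
    · -- z ≠ o, gpar z = x, dist o x + 1 = dist o z
      rcases Nat.lt_or_ge (G.dist o z) (n+1) with h2 | h2
      · omega
      · exfalso
        have hdz : G.dist o z = n + 1 := by omega
        have := hC z hzo hdz
        rw [hg] at this
        exact hne (by simpa using this)
    · omega

lemma cutset_cover {C : Finset (Sym2 V)} (w : V) :
    ((ptree hconn o).deleteEdges (C : Set (Sym2 V))).Reachable o w ∨
    ∃ y : V, y ≠ o ∧ s(gpar G hconn o y, y) ∈ C ∧ G.dist o y ≤ G.dist o w ∧
      G.dist y w ≤ G.dist o w - G.dist o y := by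
  generalize hd : G.dist o w = d
  induction d using Nat.strong_induction_on generalizing w with
  | _ d ih =>
  by_cases hwo : w = o
  · left
    rw [hwo]
  · by_cases hec : s(gpar G hconn o w, w) ∈ C
    · right
      exact ⟨w, hwo, hec, by omega, by simp [SimpleGraph.dist_self]⟩
    · have hpd := gpar_dist hconn o hwo
      have hdp : G.dist o (gpar G hconn o w) = d - 1 := by omega
      rcases ih (d-1) (by omega) (gpar G hconn o w) hdp with h | ⟨y, hy, hyC, hy1, hy2⟩
      · left
        refine h.trans (SimpleGraph.Adj.reachable ?_)
        rw [SimpleGraph.deleteEdges_adj]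
        exact ⟨ptree_adj_par hconn o hwo, by simpa using hec⟩
      · right
        refine ⟨y, hy, hyC, by omega, ?_⟩
        have htr := hconn.dist_triangle (u := y) (v := gpar G hconn o w) (w := w)
        have h1 : G.dist (gpar G hconn o w) w ≤ 1 := by
          have := SimpleGraph.dist_le (gpar_adj hconn o hwo).toWalk
          simpa using this
        omega

lemma cutset_nonempty {C : Finset (Sym2 V)} (hC : IsCutset (ptree hconn o) o C) :
    C.Nonempty := by
  rw [Finset.nonempty_iff_ne_empty]
  rintro rfl
  have h2 := hC.2
  simp only [Finset.coe_empty, SimpleGraph.deleteEdges_empty] at h2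
  have : {y : V | (ptree hconn o).Reachable o y} = Set.univ :=
    Set.eq_univ_of_forall (fun y => ptree_reachable hconn o y)
  rw [this] at h2
  exact Set.infinite_univ h2

lemma one_mem_S : (1:ℝ) ∈ {l : ℝ | 0 ≤ l ∧ ∃ ε : ℝ, 0 < ε ∧
    ∀ C : Finset (Sym2 V), IsCutset (ptree hconn o) o C →
      ε ≤ ∑ e ∈ C, l ^ (-(edgeDistToRoot (ptree hconn o) o e : ℤ))} := by
  refine ⟨zero_le_one, 1, one_pos, fun C hC => ?_⟩
  have h1 : ∑ e ∈ C, (1:ℝ) ^ (-(edgeDistToRoot (ptree hconn o) o e : ℤ)) = C.card := by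
    rw [Finset.sum_congr rfl (fun e _ => one_zpow _), Finset.sum_const, nsmul_eq_mul, mul_one]
  rw [h1]
  have := cutset_nonempty hconn o hC
  have h2 : 1 ≤ C.card := Finset.card_pos.mpr this
  exact_mod_cast h2
lemma aB_D_bound {Δ : ℕ} (hΔ : ∀ v : V, (G.neighborSet v).ncard ≤ Δ) (j d : ℕ) :
    aB G o (j + d) ≤ aB G o j * (Δ + 1) ^ d := by
  induction d with
  | zero => simp
  | succ d ih =>
    calc aB G o (j + (d+1)) = aB G o ((j + d) + 1) := by rw [Nat.add_assoc]
      _ ≤ aB G o (j + d) * (Δ + 1) := aB_succ_le hconn o hΔ _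
      _ ≤ aB G o j * (Δ + 1) ^ d * (Δ + 1) := Nat.mul_le_mul_right _ ih
      _ = aB G o j * (Δ + 1) ^ (d + 1) := by ring

lemma cutset_exists_small {s : Finset V} (hs : ∀ x : V, ∃ y ∈ s, ∃ φ : G ≃g G, φ y = x)
    {l : ℝ} (hl : Real.exp ((aB_subadditive hconn o hs).lim) < l) {ε : ℝ} (hε : 0 < ε) :
    ∃ C : Finset (Sym2 V), IsCutset (ptree hconn o) o C ∧
      ∑ e ∈ C, l ^ (-(edgeDistToRoot (ptree hconn o) o e : ℤ)) < ε := by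
  set g := Real.exp ((aB_subadditive hconn o hs).lim) with hg
  have hg1 : (1:ℝ) ≤ g := growth_ge_one hconn o hs
  set ν : ℝ := (g + l) / 2 with hν
  have hν1 : g < ν := by rw [hν]; linarith
  have hν2 : ν < l := by rw [hν]; linarith
  have hν0 : 0 < ν := by linarith
  have hl0 : (0:ℝ) < l := by linarith
  clear_value ν
  have hub := growth_ub hconn o hs hν1
  have htend : Tendsto (fun n : ℕ => ν * (ν / l) ^ n) atTop (nhds 0) := by
    have h0 : Tendsto (fun n : ℕ => (ν / l) ^ n) atTop (nhds 0) :=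
      tendsto_pow_atTop_nhds_zero_of_lt_one (by positivity) (by
        rw [div_lt_one hl0]; exact hν2)
    have := h0.const_mul ν
    simpa using this
  have hev : ∀ᶠ n : ℕ in atTop, ν * (ν / l) ^ n < ε :=
    htend.eventually_lt_const hε
  obtain ⟨N1, h1⟩ := eventually_atTop.1 hub
  obtain ⟨N2, h2⟩ := eventually_atTop.1 hev
  set n := max N1 N2 with hn
  set Cn : Finset (Sym2 V) :=
    ((Bfin hconn o (n+1)).toFinset.filter (fun y => G.dist o y = n + 1)).image
      (fun y => s(gpar G hconn o y, y)) with hCn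
  have hmem : ∀ y : V, G.dist o y = n + 1 → s(gpar G hconn o y, y) ∈ Cn := by
    intro y hy
    refine Finset.mem_image.mpr ⟨y, ?_, rfl⟩
    simp only [Finset.mem_filter, Set.Finite.mem_toFinset, Set.mem_setOf_eq]
    omega
  have hCne : ∀ e ∈ Cn, ∃ y, y ≠ o ∧ G.dist o y = n + 1 ∧ e = s(gpar G hconn o y, y) := by
    intro e he
    obtain ⟨y, hy, rfl⟩ := Finset.mem_image.mp he
    simp only [Finset.mem_filter, Set.Finite.mem_toFinset, Set.mem_setOf_eq] at hy
    refine ⟨y, ?_, hy.2, rfl⟩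
    intro h
    rw [h, SimpleGraph.dist_self] at hy
    omega
  have hcut : IsCutset (ptree hconn o) o Cn := by
    constructor
    · intro e he
      obtain ⟨y, hy0, _, rfl⟩ := hCne e he
      rw [SimpleGraph.mem_edgeSet]
      exact ptree_adj_par hconn o hy0
    · refine (Bfin hconn o n).subset ?_
      intro w hw
      obtain ⟨p⟩ := hw
      show G.dist o w ≤ n
      exact del_walk hconn o (fun y _ hyd => hmem y hyd) p (by simp [SimpleGraph.dist_self])
  refine ⟨Cn, hcut, ?_⟩
  have hterm : ∀ e ∈ Cn, l ^ (-(edgeDistToRoot (ptree hconn o) o e : ℤ)) = l ^ (-(n:ℤ)) := by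
    intro e he
    obtain ⟨y, hy0, hyd, rfl⟩ := hCne e he
    have h4 := edgeDist_eq hconn o hy0
    have hed : edgeDistToRoot (ptree hconn o) o s(gpar G hconn o y, y) = n := by omega
    rw [hed]
  rw [Finset.sum_congr rfl hterm, Finset.sum_const, nsmul_eq_mul]
  have hcard : (Cn.card : ℝ) ≤ (aB G o (n+1) : ℝ) := by
    have h3 : Cn.card ≤ aB G o (n+1) := by
      calc Cn.card ≤ ((Bfin hconn o (n+1)).toFinset.filter (fun y => G.dist o y = n + 1)).card :=
            Finset.card_image_le
        _ ≤ (Bfin hconn o (n+1)).toFinset.card := Finset.card_filter_le _ _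
        _ = aB G o (n+1) := (Set.ncard_eq_toFinset_card _ (Bfin hconn o (n+1))).symm
    exact_mod_cast h3
  have hlne : l ≠ 0 := ne_of_gt hl0
  have hzpos : (0:ℝ) < l ^ (-(n:ℤ)) := zpow_pos hl0 _
  calc (Cn.card : ℝ) * l ^ (-(n:ℤ))
      ≤ (aB G o (n+1) : ℝ) * l ^ (-(n:ℤ)) :=
        mul_le_mul_of_nonneg_right hcard (le_of_lt hzpos)
    _ ≤ ν ^ (n+1) * l ^ (-(n:ℤ)) :=
        mul_le_mul_of_nonneg_right (h1 (n+1) (by omega)) (le_of_lt hzpos)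
    _ = ν * (ν / l) ^ n := by
        rw [zpow_neg, zpow_natCast, div_pow, pow_succ, div_eq_mul_inv]
        ring
    _ < ε := h2 n (le_max_right _ _)
lemma cutset_sum_lb {s : Finset V} (hs : ∀ x : V, ∃ y ∈ s, ∃ φ : G ≃g G, φ y = x)
    {Δ : ℕ} (hΔ : ∀ v : V, (G.neighborSet v).ncard ≤ Δ)
    {lam : ℝ} (hlam1 : 1 < lam) (hlamg : lam < Real.exp ((aB_subadditive hconn o hs).lim))
    {C : Finset (Sym2 V)} (hC : IsCutset (ptree hconn o) o C) :
    (1 : ℝ) / (2 * ((Δ : ℝ) + 1) ^ (s.sup (fun y => G.dist o y))) ≤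
      ∑ e ∈ C, lam ^ (-(edgeDistToRoot (ptree hconn o) o e : ℤ)) := by
  set D := s.sup (fun y => G.dist o y) with hD
  set g := Real.exp ((aB_subadditive hconn o hs).lim) with hg
  set q : ℝ := lam⁻¹ with hqdef
  have hlam0 : (0:ℝ) < lam := by linarith
  have hq0 : 0 < q := by positivity
  have hq1 : q < 1 := by
    rw [hqdef]
    exact inv_lt_one_of_one_lt₀ hlam1
  have hsum : ∑ e ∈ C, lam ^ (-(edgeDistToRoot (ptree hconn o) o e : ℤ))
      = ∑ e ∈ C, q ^ (edgeDistToRoot (ptree hconn o) o e) := by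
    refine Finset.sum_congr rfl (fun e _ => ?_)
    rw [zpow_neg, zpow_natCast, hqdef, inv_pow]
  rw [hsum]
  by_contra hcon
  push_neg at hcon
  set Sig : ℝ := ∑ e ∈ C, q ^ (edgeDistToRoot (ptree hconn o) o e) with hSig
  have hSig0 : 0 ≤ Sig := Finset.sum_nonneg (fun e _ => by positivity)
  -- children of cut edges
  have hch : ∀ e ∈ C, ∃ y, y ≠ o ∧ e = s(gpar G hconn o y, y) :=
    fun e he => tree_edge hconn o (hC.1 e he)
  choose! ch hch1 hch2 using hch
  have hchd : ∀ e ∈ C, edgeDistToRoot (ptree hconn o) o e + 1 = G.dist o (ch e) := by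
    intro e he
    have h2 := hch2 e he
    conv_lhs => rw [h2]
    exact edgeDist_eq hconn o (hch1 e he)
  set K : Set V := {y : V | ((ptree hconn o).deleteEdges (C : Set (Sym2 V))).Reachable o y}
    with hK
  have hKfin : K.Finite := hC.2
  set U : ℕ → Sym2 V → Set V := fun n e =>
    {w : V | G.dist o (ch e) ≤ n ∧ G.dist (ch e) w ≤ n - G.dist o (ch e)} with hU
  have hUfin : ∀ (n : ℕ) (e : Sym2 V), (U n e).Finite := by
    intro n e
    refine (Bfin hconn (ch e) n).subset ?_
    intro w hw
    exact le_trans hw.2 (by omega)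
  -- covering
  have hcover : ∀ (n : ℕ) (w : V), G.dist o w ≤ n → w ∈ K ∪ ⋃ e ∈ C, U n e := by
    intro n w hw
    rcases cutset_cover hconn o (C := C) w with h | ⟨y, hy, hyC, hy1, hy2⟩
    · exact Set.mem_union_left _ h
    · refine Set.mem_union_right _ ?_
      have hcy : ch s(gpar G hconn o y, y) = y :=
        (child_eq hconn o hy (hch1 _ hyC) (hch2 _ hyC)).symm
      refine Set.mem_biUnion hyC (show w ∈ U n s(gpar G hconn o y, y) from ?_)
      rw [hU]
      simp only [Set.mem_setOf_eq, hcy]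
      omega
  -- counting
  have hcount : ∀ n : ℕ, aB G o n ≤ K.ncard + ∑ e ∈ C, (U n e).ncard := by
    intro n
    have hsubset : {y : V | G.dist o y ≤ n} ⊆ K ∪ ⋃ e ∈ C, U n e :=
      fun w hw => hcover n w hw
    calc aB G o n ≤ (K ∪ ⋃ e ∈ C, U n e).ncard :=
          Set.ncard_le_ncard hsubset (hKfin.union
            (Set.Finite.biUnion (C.finite_toSet) (fun e _ => hUfin n e)))
      _ ≤ K.ncard + (⋃ e ∈ C, U n e).ncard := Set.ncard_union_le _ _
      _ ≤ K.ncard + ∑ e ∈ C, (U n e).ncard := by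
          have := ncard_biUnion_le C (U n)
          omega
  have hUcard : ∀ (n : ℕ) (e : Sym2 V), e ∈ C → G.dist o (ch e) ≤ n →
      (U n e).ncard ≤ aB G o (n - G.dist o (ch e) + D) := by
    intro n e he hle
    refine le_trans (Set.ncard_le_ncard ?_ (Bfin hconn (ch e) (n - G.dist o (ch e)))) ?_
    · intro w hw
      exact hw.2
    · exact xball_card hconn o hs (ch e) _
  have hUempty : ∀ (n : ℕ) (e : Sym2 V), ¬ (G.dist o (ch e) ≤ n) → (U n e).ncard = 0 := by
    intro n e hgt
    have : U n e = ∅ := by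
      rw [hU]
      ext w
      simp only [Set.mem_setOf_eq, Set.mem_empty_iff_false, iff_false, not_and]
      intro h
      exact absurd h hgt
    rw [this, Set.ncard_empty]
  -- real phase
  set A : ℕ → ℝ := fun n => (aB G o n : ℝ) with hA
  have hA1 : ∀ n, 1 ≤ A n := fun n => aB_cast_pos hconn o n
  set k : ℝ := (K.ncard : ℝ) with hk
  have hk0 : 0 ≤ k := by positivity
  set Sm : ℕ → ℝ := fun M => ∑ n ∈ Finset.range (M+1), A n * q ^ n with hSm
  have hsummable : Summable (fun n : ℕ => q ^ n) :=
    summable_geometric_of_lt_one (le_of_lt hq0) hq1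
  have hgeo : ∀ M : ℕ, ∑ n ∈ Finset.range M, q ^ n ≤ (1 - q)⁻¹ := by
    intro M
    rw [← tsum_geometric_of_lt_one (le_of_lt hq0) hq1]
    exact hsummable.sum_le_tsum _ (fun i _ => by positivity)
  -- inner bound per edge
  have hinner : ∀ (M : ℕ) (e : Sym2 V), e ∈ C →
      ∑ n ∈ Finset.range (M+1), ((U n e).ncard : ℝ) * q ^ n ≤
        ((Δ : ℝ) + 1) ^ D * q ^ (G.dist o (ch e)) * Sm M := by
    intro M e he
    set c := G.dist o (ch e) with hc
    have hstep : ∀ n ∈ Finset.range (M+1), ((U n e).ncard : ℝ) * q ^ n ≤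
        (if c ≤ n then ((Δ : ℝ) + 1) ^ D * q ^ c * (A (n - c) * q ^ (n - c)) else 0) := by
      intro n _
      by_cases hcn : c ≤ n
      · rw [if_pos hcn]
        have h1 : ((U n e).ncard : ℝ) ≤ A (n - c) * ((Δ : ℝ) + 1) ^ D := by
          have h2 := hUcard n e he hcn
          have h3 := aB_D_bound hconn o hΔ (n - c) D
          have h4 : (U n e).ncard ≤ aB G o (n - c) * (Δ + 1) ^ D := le_trans h2 h3
          calc ((U n e).ncard : ℝ) ≤ ((aB G o (n - c) * (Δ + 1) ^ D : ℕ) : ℝ) := by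
                exact_mod_cast h4
            _ = A (n - c) * ((Δ : ℝ) + 1) ^ D := by push_cast; ring
        have hqn : q ^ n = q ^ (n - c) * q ^ c := by
          rw [← pow_add]
          congr 1
          omega
        calc ((U n e).ncard : ℝ) * q ^ n ≤ (A (n - c) * ((Δ : ℝ) + 1) ^ D) * q ^ n := by
              refine mul_le_mul_of_nonneg_right h1 (by positivity)
          _ = ((Δ : ℝ) + 1) ^ D * q ^ c * (A (n - c) * q ^ (n - c)) := by
              rw [hqn]; ring
      · rw [if_neg hcn, hUempty n e hcn]
        simp
    refine le_trans (Finset.sum_le_sum hstep) ?_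
    rw [Finset.sum_ite, Finset.sum_const, smul_zero, add_zero]
    have hre : ∑ n ∈ (Finset.range (M+1)).filter (fun n => c ≤ n),
        ((Δ : ℝ) + 1) ^ D * q ^ c * (A (n - c) * q ^ (n - c))
        = ((Δ : ℝ) + 1) ^ D * q ^ c *
          ∑ n ∈ (Finset.range (M+1)).filter (fun n => c ≤ n), A (n - c) * q ^ (n - c) := by
      rw [Finset.mul_sum]
    rw [hre]
    refine mul_le_mul_of_nonneg_left ?_ (by positivity)
    -- reindex
    have himg : ∑ n ∈ (Finset.range (M+1)).filter (fun n => c ≤ n), A (n - c) * q ^ (n - c)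
        = ∑ j ∈ ((Finset.range (M+1)).filter (fun n => c ≤ n)).image (fun n => n - c),
            A j * q ^ j := by
      rw [Finset.sum_image]
      intro x hx y hy hxy
      simp only [Finset.mem_coe, Finset.mem_filter, Finset.mem_range] at hx hy hxy
      omega
    rw [himg]
    refine Finset.sum_le_sum_of_subset_of_nonneg ?_ (fun i _ _ => by positivity)
    intro j hj
    simp only [Finset.mem_image, Finset.mem_filter, Finset.mem_range] at hj
    obtain ⟨n, ⟨hn1, hn2⟩, rfl⟩ := hj
    simp only [Finset.mem_range]
    omega
  -- master inequality
  have hmaster : ∀ M : ℕ, Sm M ≤ k * (1 - q)⁻¹ + ((Δ : ℝ) + 1) ^ D * q * Sig * Sm M := by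
    intro M
    have h1 : Sm M ≤ ∑ n ∈ Finset.range (M+1),
        (k + ∑ e ∈ C, ((U n e).ncard : ℝ)) * q ^ n := by
      refine Finset.sum_le_sum (fun n _ => ?_)
      refine mul_le_mul_of_nonneg_right ?_ (by positivity)
      have h2 := hcount n
      have h3 : (aB G o n : ℝ) ≤ ((K.ncard + ∑ e ∈ C, (U n e).ncard : ℕ) : ℝ) := by
        exact_mod_cast h2
      calc A n ≤ ((K.ncard + ∑ e ∈ C, (U n e).ncard : ℕ) : ℝ) := h3
        _ = k + ∑ e ∈ C, ((U n e).ncard : ℝ) := by push_cast; ring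
    have h4 : ∑ n ∈ Finset.range (M+1), (k + ∑ e ∈ C, ((U n e).ncard : ℝ)) * q ^ n
        = k * ∑ n ∈ Finset.range (M+1), q ^ n
          + ∑ n ∈ Finset.range (M+1), ∑ e ∈ C, ((U n e).ncard : ℝ) * q ^ n := by
      rw [Finset.mul_sum, ← Finset.sum_add_distrib]
      refine Finset.sum_congr rfl (fun n _ => ?_)
      rw [add_mul, Finset.sum_mul]
    have h5 : ∑ n ∈ Finset.range (M+1), ∑ e ∈ C, ((U n e).ncard : ℝ) * q ^ n
        = ∑ e ∈ C, ∑ n ∈ Finset.range (M+1), ((U n e).ncard : ℝ) * q ^ n :=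
      Finset.sum_comm
    have h6 : ∑ e ∈ C, ∑ n ∈ Finset.range (M+1), ((U n e).ncard : ℝ) * q ^ n
        ≤ ∑ e ∈ C, ((Δ : ℝ) + 1) ^ D * q ^ (G.dist o (ch e)) * Sm M :=
      Finset.sum_le_sum (fun e he => hinner M e he)
    have h7 : ∑ e ∈ C, ((Δ : ℝ) + 1) ^ D * q ^ (G.dist o (ch e)) * Sm M
        = ((Δ : ℝ) + 1) ^ D * q * Sig * Sm M := by
      have h7a : ∀ e ∈ C, ((Δ : ℝ) + 1) ^ D * q ^ (G.dist o (ch e)) * Sm M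
          = ((Δ : ℝ) + 1) ^ D * q * Sm M * q ^ (edgeDistToRoot (ptree hconn o) o e) := by
        intro e he
        have h8 : q ^ (G.dist o (ch e)) = q ^ (edgeDistToRoot (ptree hconn o) o e) * q := by
          rw [← pow_succ]
          congr 1
          exact (hchd e he).symm
        rw [h8]
        ring
      rw [Finset.sum_congr rfl h7a, ← Finset.mul_sum, ← hSig]
      ring
    have h9 : k * ∑ n ∈ Finset.range (M+1), q ^ n ≤ k * (1 - q)⁻¹ :=
      mul_le_mul_of_nonneg_left (hgeo (M+1)) hk0
    calc Sm M ≤ _ := h1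
      _ = _ := h4
      _ ≤ k * (1 - q)⁻¹ + ((Δ : ℝ) + 1) ^ D * q * Sig * Sm M := by
          rw [h5] at *
          have := le_trans h6 (le_of_eq h7)
          have h10 := add_le_add h9 this
          exact h10
  -- the factor is at most 1/2
  have hΔD : (0:ℝ) < ((Δ : ℝ) + 1) ^ D := by positivity
  have hhalf : ((Δ : ℝ) + 1) ^ D * q * Sig ≤ 1 / 2 := by
    have h1 : ((Δ : ℝ) + 1) ^ D * q * Sig ≤ ((Δ : ℝ) + 1) ^ D * 1 * Sig := by
      refine mul_le_mul_of_nonneg_right ?_ hSig0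
      refine mul_le_mul_of_nonneg_left (le_of_lt hq1) (le_of_lt hΔD)
    have h2 : ((Δ : ℝ) + 1) ^ D * 1 * Sig ≤ ((Δ : ℝ) + 1) ^ D * (1 / (2 * ((Δ : ℝ) + 1) ^ D)) := by
      rw [mul_one]
      exact mul_le_mul_of_nonneg_left (le_of_lt hcon) (le_of_lt hΔD)
    have h3 : ((Δ : ℝ) + 1) ^ D * (1 / (2 * ((Δ : ℝ) + 1) ^ D)) = 1 / 2 := by
      field_simp
    linarith
  have hbdd : ∀ M : ℕ, Sm M ≤ 2 * (k * (1 - q)⁻¹) := by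
    intro M
    have h1 := hmaster M
    have hSm0 : 0 ≤ Sm M := Finset.sum_nonneg (fun n _ => by
      have := hA1 n
      positivity)
    have h2 : ((Δ : ℝ) + 1) ^ D * q * Sig * Sm M ≤ (1/2) * Sm M :=
      mul_le_mul_of_nonneg_right hhalf hSm0
    linarith
  -- divergence
  have hgq : 1 < g * q := by
    rw [hqdef, ← div_eq_mul_inv]
    rw [lt_div_iff₀ hlam0]
    linarith
  have hdiv : Tendsto (fun m : ℕ => q ^ D * (g * q) ^ m) atTop atTop := by
    have h0 := tendsto_pow_atTop_atTop_of_one_lt hgq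
    exact Tendsto.const_mul_atTop (by positivity) h0
  obtain ⟨m, hm⟩ := (hdiv.eventually_gt_atTop (2 * (k * (1 - q)⁻¹))).exists
  have hSmlb : q ^ D * (g * q) ^ m ≤ Sm (D + m) := by
    have h1 : A (D + m) * q ^ (D + m) ≤ Sm (D + m) := by
      refine Finset.single_le_sum (f := fun n => A n * q ^ n) (fun n _ => by
        have := hA1 n
        positivity) ?_
      simp only [Finset.mem_range]
      omega
    have h2 : g ^ m ≤ A (D + m) := by
      have h3 := growth_lb hconn o hs m
      have h4 : m + D = D + m := by omega
      rw [h4] at h3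
      exact h3
    have h5 : q ^ D * (g * q) ^ m = g ^ m * q ^ (D + m) := by
      rw [mul_pow, pow_add]
      ring
    rw [h5]
    refine le_trans (mul_le_mul_of_nonneg_right h2 (by positivity)) h1
  have := hbdd (D + m)
  linarith
lemma branching_eq {s : Finset V} (hs : ∀ x : V, ∃ y ∈ s, ∃ φ : G ≃g G, φ y = x)
    {Δ : ℕ} (hΔ : ∀ v : V, (G.neighborSet v).ncard ≤ Δ) :
    branchingNumber (ptree hconn o) o = Real.exp ((aB_subadditive hconn o hs).lim) := by
  rw [branchingNumber]
  set g := Real.exp ((aB_subadditive hconn o hs).lim) with hg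
  have hg1 : (1:ℝ) ≤ g := growth_ge_one hconn o hs
  set SS := {l : ℝ | 0 ≤ l ∧ ∃ ε : ℝ, 0 < ε ∧ ∀ C : Finset (Sym2 V),
    IsCutset (ptree hconn o) o C →
      ε ≤ ∑ e ∈ C, l ^ (-(edgeDistToRoot (ptree hconn o) o e : ℤ))} with hSS
  have hub : ∀ l ∈ SS, l ≤ g := by
    intro l hl
    by_contra hgt
    push_neg at hgt
    obtain ⟨hl0, ε, hε, hall⟩ := hl
    obtain ⟨C, hCc, hCs⟩ := cutset_exists_small hconn o hs hgt hε
    exact absurd (hall C hCc) (not_le.mpr hCs)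
  have h1S : (1:ℝ) ∈ SS := one_mem_S hconn o
  have hbdd : BddAbove SS := ⟨g, hub⟩
  have hne : SS.Nonempty := ⟨1, h1S⟩
  refine le_antisymm (csSup_le hne hub) ?_
  by_contra hlt
  push_neg at hlt
  have hs1 : (1:ℝ) ≤ sSup SS := le_csSup hbdd h1S
  set lam := (sSup SS + g) / 2 with hlam
  have hlam1 : 1 < lam := by
    rw [hlam]
    linarith
  have hlamg : lam < g := by
    rw [hlam]
    linarith
  have hmem : lam ∈ SS := by
    refine ⟨by linarith, 1 / (2 * ((Δ:ℝ)+1) ^ (s.sup (fun y => G.dist o y))), by positivity, ?_⟩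
    intro C hCc
    exact cutset_sum_lb hconn o hs hΔ hlam1 hlamg hCc
  have hfin := le_csSup hbdd hmem
  rw [hlam] at hfin
  linarith

end Counting
end St14

/-- Every connected, locally finite, quasi-transitive infinite graph `G` with a
fixed root `o` admits a geodesic spanning tree `T` (distances from `o` in `T` equal those in
`G`) such that `br(T) = gr(T) = gr(G)`. -/
theorem statement_14
    {V : Type*} (G : SimpleGraph V) [∀ v : V, Fintype (G.neighborSet v)] [Infinite V]
    (hconn : G.Connected) (hqt : QuasiTransitive G) (o : V) :
    ∃ T : SimpleGraph V, T ≤ G ∧ T.Connected ∧ T.IsAcyclic ∧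
      (∀ x : V, T.dist o x = G.dist o x) ∧
      ∃ g : ℝ, HasGrowthRate G o g ∧ HasGrowthRate T o g ∧ branchingNumber T o = g := by
  classical
  obtain ⟨s, hs⟩ := hqt
  obtain ⟨Δ, hΔ⟩ := St14.exists_deg_bound hconn ⟨s, hs⟩
  refine ⟨St14.ptree hconn o, St14.ptree_le hconn o, St14.ptree_connected hconn o,
    St14.ptree_acyclic hconn o, St14.ptree_dist hconn o,
    Real.exp ((St14.aB_subadditive hconn o hs).lim), ?_, ?_, ?_⟩
  · exact St14.growth_tendsto hconn o hs
  · have hset : ∀ n : ℕ, {y : V | (St14.ptree hconn o).dist o y ≤ n}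
        = {y : V | G.dist o y ≤ n} := by
      intro n
      ext y
      simp [St14.ptree_dist hconn o y]
    have h := St14.growth_tendsto hconn o hs
    rw [HasGrowthRate]
    refine h.congr (fun n => ?_)
    rw [hset n]
    rfl
  · exact St14.branching_eq hconn o hs hΔ


end
end
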